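/- arXiv:2007.14654 — 4 statements merged into one kernel-verified Lean document; each statement's English description precedes it below -/
import Mathlib

section
/- Let D^t ⊆ ℝ^n be open and D^z ⊆ ℝ^s be open and symmetric under componentwise sign changes. Let f : D^t → ℝ and cE : D^t × D^z → ℝ^{m₁}, cI : D^t × D^z → ℝ^{m₂}, cZ : D^t × D^z → ℝ^s be continuously differentiable. Let y* = (t*, u*, v*) with t* ∈ D^t, u* + v* ∈ D^z, u*, v* ≥ 0, u*ᵢv*ᵢ = 0 for all i, cE(t*,u*+v*) = 0, cI(t*,u*+v*) ≥ 0, cZ(t*,u*+v*) = u* − v*, and suppose y* is a local minimizer of (t,u,v) ↦ f(t) over the feasible set F_mpcc = {(t,u,v) : t ∈ D^t, u+v ∈ D^z, u ≥ 0, v ≥ 0, uᵢvᵢ = 0 ∀i, cE(t,u+v) = 0, cI(t,u+v) ≥ 0, cZ(t,u+v) = u−v}. Set U₊ = {i : u*ᵢ > 0}, V₊ = {i : v*ᵢ > 0}, D = {i : u*ᵢ = v*ᵢ = 0}, A = {i : cIᵢ(t*,u*+v*) = 0}, and let a star on ∂₁, ∂₂ denote evaluation at (t*, u*+v*). Assume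 MPCC-LICQ: the matrix [[∂₁cE*, ∂₂cE*P_{U₊}ᵀ, ∂₂cE*P_{V₊}ᵀ], [P_A∂₁cI*, P_A∂₂cI*P_{U₊}ᵀ, P_A∂₂cI*P_{V₊}ᵀ], [∂₁cZ*, (∂₂cZ*−I)P_{U₊}ᵀ, (∂₂cZ*+I)P_{V₊}ᵀ]] has full row rank m₁ + |A| + s. Then y* is S-stationary: there exist λ_E ∈ ℝ^{m₁}, λ_I ∈ ℝ^{m₂}, λ_Z ∈ ℝ^s and μᵘ, μᵛ ∈ ℝ^s with ∇f(t*) + (∂₁cE*)ᵀλ_E − (∂₁cI*)ᵀλ_I + (∂₁cZ*)ᵀλ_Z = 0; (∂₂cE*)ᵀλ_E − (∂₂cI*)ᵀλ_I + (∂₂cZ* − I)ᵀλ_Z − μᵘ = 0; (∂₂cE*)ᵀλ_E − (∂₂cI*)ᵀλ_I + (∂₂cZ* + I)ᵀλ_Z − μᵛ = 0; μᵘᵢ ≥ 0 and μᵛᵢ ≥ 0 for i ∈ D; μᵘᵢ = 0 for i ∈ U₊; μᵛᵢ = 0 for i ∈ V₊; λ_I ≥ 0; and λ_Iᵀ cI(t*,u*+v*)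 = 0. -/
open Matrix
open scoped Classical Topology

noncomputable section

/-- Selection matrix `P_S` whose rows are the unit row vectors `eᵢᵀ`, `i ∈ S`. -/
def sel {k : ℕ} (p : Fin k → Prop) : Matrix {i // p i} (Fin k) ℝ :=
  Matrix.of fun i j => if (i : Fin k) = j then 1 else 0

/-- Partial Jacobian with respect to the first argument. -/
def jac1 {n s m : ℕ} (c : (Fin n → ℝ) × (Fin s → ℝ) → Fin m → ℝ)
    (p : (Fin n → ℝ) × (Fin s → ℝ)) : Matrix (Fin m) (Fin n) ℝ :=
  Matrix.of fun i j => fderiv ℝ c p (Pi.single j 1, 0) i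

/-- Partial Jacobian with respect to the second argument. -/
def jac2 {n s m : ℕ} (c : (Fin n → ℝ) × (Fin s → ℝ) → Fin m → ℝ)
    (p : (Fin n → ℝ) × (Fin s → ℝ)) : Matrix (Fin m) (Fin s) ℝ :=
  Matrix.of fun i j => fderiv ℝ c p (0, Pi.single j 1) i

section Helpers
open Filter Set Metric Topology

theorem quant_preimage {E F : Type*} [NormedAddCommGroup E] [NormedSpace ℝ E] [CompleteSpace E]
    [NormedAddCommGroup F] [NormedSpace ℝ F] [CompleteSpace F]
    {Φ : E → F} {Φ' : E →L[ℝ] F} {a : E}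
    (hΦ : HasStrictFDerivAt Φ Φ' a) (hsurj : LinearMap.range (Φ' : E →ₗ[ℝ] F) = ⊤) :
    ∃ C > (0:ℝ), ∃ r > (0:ℝ), ∀ y : F, ‖y - Φ a‖ ≤ r →
      ∃ x, Φ x = y ∧ ‖x - a‖ ≤ C * ‖y - Φ a‖ := by
  set fs := Φ'.nonlinearRightInverseOfSurjective hsurj with hfs
  have hN : 0 < fs.nnnorm := Φ'.nonlinearRightInverseOfSurjective_nnnorm_pos hsurj
  set c : NNReal := fs.nnnorm⁻¹ / 2 with hc
  have hcpos : 0 < c := by positivity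
  obtain ⟨s, s_nhds, hs⟩ := hΦ.approximates_deriv_on_nhds (Or.inr hcpos)
  obtain ⟨r₀, hr₀, hball⟩ := Metric.mem_nhds_iff.1 s_nhds
  set κ : ℝ := ((fs.nnnorm : ℝ))⁻¹ - (c : ℝ) with hκ
  have hκval : κ = ((fs.nnnorm : ℝ))⁻¹ / 2 := by
    rw [hκ, hc]; push_cast; ring
  have hκpos : 0 < κ := by
    rw [hκval]; positivity
  refine ⟨κ⁻¹, by positivity, κ * (r₀/2), by positivity, fun y hy => ?_⟩
  set ε : ℝ := κ⁻¹ * ‖y - Φ a‖ with hε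
  have hεnn : 0 ≤ ε := by positivity
  have hεr : ε ≤ r₀/2 := by
    have h1 : κ⁻¹ * ‖y - Φ a‖ ≤ κ⁻¹ * (κ * (r₀/2)) :=
      mul_le_mul_of_nonneg_left hy (by positivity)
    calc ε = κ⁻¹ * ‖y - Φ a‖ := hε
      _ ≤ κ⁻¹ * (κ * (r₀/2)) := h1
      _ = r₀/2 := by field_simp
  have hsub : closedBall a ε ⊆ s := fun x hx => hball (lt_of_le_of_lt
    (mem_closedBall.1 hx) (lt_of_le_of_lt hεr (by linarith)))
  have happ := hs.mono_set hsub
  have hsurjOn := happ.surjOn_closedBall_of_nonlinearRightInverse fs hεnn (Subset.refl _)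
  have hyin : y ∈ closedBall (Φ a) ((((fs.nnnorm : ℝ))⁻¹ - c) * ε) := by
    rw [mem_closedBall, dist_eq_norm]
    have : (((fs.nnnorm : ℝ))⁻¹ - (c:ℝ)) * ε = ‖y - Φ a‖ := by
      rw [hε, ← hκ]; field_simp
    rw [this]
  obtain ⟨x, hx, hΦx⟩ := hsurjOn hyin
  exact ⟨x, hΦx, by simpa [dist_eq_norm] using mem_closedBall.1 hx⟩

theorem kkt_abstract {E : Type*} [NormedAddCommGroup E] [NormedSpace ℝ E] [CompleteSpace E]
    {ι : Type*} [Fintype ι] [DecidableEq ι]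
    {Φ : ι → E → ℝ} {Φ' : ι → E →L[ℝ] ℝ} {f : E → ℝ} {f' : E →L[ℝ] ℝ} {a : E}
    (hΦ : ∀ i, HasStrictFDerivAt (Φ i) (Φ' i) a)
    (hf : HasStrictFDerivAt f f' a)
    (hΦa : ∀ i, Φ i a = 0)
    (hsurj : LinearMap.range (ContinuousLinearMap.pi Φ' : E →ₗ[ℝ] (ι → ℝ)) = ⊤)
    (I : Set ι)
    (hmin : ∀ᶠ x in 𝓝 a, ((∀ i ∈ I, 0 ≤ Φ i x) ∧ (∀ i ∉ I, Φ i x = 0)) → f a ≤ f x) :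
    ∃ μ : ι → ℝ, (∀ i ∈ I, 0 ≤ μ i) ∧ f' = ∑ i, μ i • Φ' i := by
  -- surjectivity: solving linear systems
  have hS : Function.Surjective (ContinuousLinearMap.pi Φ') := by
    exact LinearMap.range_eq_top.1 hsurj
  have solve : ∀ c : ι → ℝ, ∃ x : E, ∀ i, Φ' i x = c i := by
    intro c; obtain ⟨x, hx⟩ := hS c
    exact ⟨x, fun i => by rw [← congrFun hx i]; rfl⟩
  -- Step A: existence of multipliers
  have hext : IsLocalExtrOn f {x | ∀ i, Φ i x = Φ i a} a := by
    left
    filter_upwards [hmin.filter_mono nhdsWithin_le_nhds, self_mem_nhdsWithin] with x h hxS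
    exact h ⟨fun i _ => by rw [hxS i, hΦa i], fun i _ => by rw [hxS i, hΦa i]⟩
  obtain ⟨Λ, Λ₀, hne, hsum⟩ := hext.exists_multipliers_of_hasStrictFDerivAt hΦ hf
  have hΛ₀ : Λ₀ ≠ 0 := by
    intro h0
    obtain ⟨x, hx⟩ := solve Λ
    have := congrFun (congrArg DFunLike.coe hsum) x
    simp only [h0, zero_smul, add_zero, ContinuousLinearMap.zero_apply,
      ContinuousLinearMap.sum_apply, ContinuousLinearMap.smul_apply, smul_eq_mul] at this
    have hΛ : ∀ i, Λ i = 0 := by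
      intro i
      have hsq : ∑ j, Λ j * Λ j = 0 := by
        rw [← this]; exact Finset.sum_congr rfl fun j _ => by rw [hx j]
      have := Finset.sum_eq_zero_iff_of_nonneg (fun j _ => mul_self_nonneg (Λ j)) |>.1 hsq i
        (Finset.mem_univ i)
      exact (mul_self_eq_zero).1 this
    apply hne
    have : Λ = 0 := funext fun i => hΛ i
    rw [Prod.ext_iff]
    exact ⟨this, h0⟩
  set μ : ι → ℝ := fun i => -(Λ i / Λ₀) with hμ
  have hrep : f' = ∑ i, μ i • Φ' i := by
    ext x
    have h := congrFun (congrArg DFunLike.coe hsum) x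
    simp only [ContinuousLinearMap.add_apply, ContinuousLinearMap.coe_sum', Finset.sum_apply,
      ContinuousLinearMap.coe_smul', Pi.smul_apply, smul_eq_mul,
      ContinuousLinearMap.zero_apply, Pi.zero_apply] at h
    simp only [ContinuousLinearMap.coe_sum', Finset.sum_apply, ContinuousLinearMap.coe_smul',
      Pi.smul_apply, smul_eq_mul, hμ]
    have h2 : ∑ i, -(Λ i / Λ₀) * (Φ' i) x = -(Λ₀⁻¹) * ∑ i, Λ i * (Φ' i) x := by
      rw [Finset.mul_sum]; exact Finset.sum_congr rfl fun i _ => by ring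
    have hS' : ∑ i, Λ i * (Φ' i) x = -(Λ₀ * f' x) := by linarith
    rw [h2, hS']; field_simp
  refine ⟨μ, ?_, hrep⟩
  -- Step B: sign of multipliers on inequality indices
  intro i₀ hi₀
  by_contra hneg
  push_neg at hneg
  set δ : ℝ := -μ i₀ with hδ
  have hδpos : 0 < δ := by simp [hδ]; linarith
  -- the full constraint map and its quantitative surjectivity
  have hΦpi : HasStrictFDerivAt (fun x => (fun i => Φ i x))
      (ContinuousLinearMap.pi Φ') a := hasStrictFDerivAt_pi.2 hΦ
  obtain ⟨C, hC, r, hr, hq⟩ := quant_preimage hΦpi hsurj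
  set M : ℝ := ∑ i, |μ i| with hM
  have hM0 : 0 ≤ M := Finset.sum_nonneg fun i _ => abs_nonneg _
  set ε : ℝ := δ / (2 * C * (1 + M)) with hε
  have hεpos : 0 < ε := by positivity
  -- little-o estimates
  have hfo : ∀ᶠ x in nhds a, ‖f x - f a - f' (x - a)‖ ≤ ε * ‖x - a‖ := by
    have := hf.hasFDerivAt.isLittleO
    exact (Asymptotics.isLittleO_iff.1 this) hεpos
  have hΦo : ∀ᶠ x in nhds a, ∀ i, ‖Φ i x - Φ i a - Φ' i (x - a)‖ ≤ ε * ‖x - a‖ := by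
    rw [eventually_all]
    exact fun i => (Asymptotics.isLittleO_iff.1 (hΦ i).hasFDerivAt.isLittleO) hεpos
  obtain ⟨ρ, hρ, hball⟩ := Metric.eventually_nhds_iff.1 (hfo.and (hΦo.and hmin))
  -- choose τ and construct the feasible point
  set τ : ℝ := min r (ρ / (2 * C)) with hτ
  have hτpos : 0 < τ := lt_min hr (by positivity)
  set y : ι → ℝ := fun i => if i = i₀ then τ else 0 with hy
  have hynorm : ‖y - (fun i => Φ i a)‖ ≤ τ := by
    have : (fun i => Φ i a) = (0 : ι → ℝ) := funext hΦa
    rw [this, sub_zero]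
    refine (pi_norm_le_iff_of_nonneg hτpos.le).2 fun i => ?_
    rw [hy]; dsimp only
    split
    · simp [Real.norm_eq_abs, abs_of_pos hτpos]
    · simp [hτpos.le]
  obtain ⟨x, hΦx, hxa⟩ := hq y (hynorm.trans (min_le_left _ _))
  have hxa' : ‖x - a‖ ≤ C * τ := hxa.trans (by
    have := mul_le_mul_of_nonneg_left hynorm hC.le
    linarith)
  have hxball : dist x a < ρ := by
    rw [dist_eq_norm]
    calc ‖x - a‖ ≤ C * τ := hxa'
      _ ≤ C * (ρ / (2 * C)) := by
          apply mul_le_mul_of_nonneg_left (min_le_right _ _) hC.le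
      _ = ρ / 2 := by field_simp
      _ < ρ := by linarith
  obtain ⟨hfx, hΦix, hminx⟩ := hball hxball
  have hΦxi : ∀ i, Φ i x = y i := fun i => congrFun hΦx i
  -- x is feasible
  have hfeas : (∀ i ∈ I, 0 ≤ Φ i x) ∧ (∀ i ∉ I, Φ i x = 0) := by
    constructor
    · intro i _
      rw [hΦxi i, hy]; dsimp only
      split
      · exact hτpos.le
      · exact le_refl 0
    · intro i hi
      rw [hΦxi i, hy]; dsimp only
      rw [if_neg]
      intro h; exact hi (h ▸ hi₀)
  have hge : f a ≤ f x := hminx hfeas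
  -- the contradiction
  have hder : f' (x - a) = ∑ i, μ i * Φ' i (x - a) := by
    rw [hrep]
    simp [ContinuousLinearMap.coe_sum', Finset.sum_apply]
  have hkey : ∀ i, Φ' i (x - a) = y i - (Φ i x - Φ i a - Φ' i (x - a)) := by
    intro i
    rw [← hΦxi i, hΦa i]; ring
  have hsum1 : ∑ i, μ i * Φ' i (x - a) =
      μ i₀ * τ - ∑ i, μ i * (Φ i x - Φ i a - Φ' i (x - a)) := by
    have : ∑ i, μ i * Φ' i (x - a)
        = ∑ i, (μ i * y i - μ i * (Φ i x - Φ i a - Φ' i (x - a))) := by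
      refine Finset.sum_congr rfl fun i _ => by linear_combination (μ i) * (hkey i)
    rw [this, Finset.sum_sub_distrib]
    congr 1
    rw [hy]
    simp [Finset.sum_ite_eq' Finset.univ i₀ fun i => μ i * τ]
  have herr : |∑ i, μ i * (Φ i x - Φ i a - Φ' i (x - a))| ≤ M * (ε * ‖x - a‖) := by
    calc |∑ i, μ i * (Φ i x - Φ i a - Φ' i (x - a))|
        ≤ ∑ i, |μ i * (Φ i x - Φ i a - Φ' i (x - a))| := Finset.abs_sum_le_sum_abs _ _
      _ ≤ ∑ i, |μ i| * (ε * ‖x - a‖) := by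
          refine Finset.sum_le_sum fun i _ => ?_
          rw [abs_mul]
          exact mul_le_mul_of_nonneg_left (by simpa [Real.norm_eq_abs] using hΦix i)
            (abs_nonneg _)
      _ = M * (ε * ‖x - a‖) := by rw [hM, Finset.sum_mul]
  have hfb : |f x - f a - f' (x - a)| ≤ ε * ‖x - a‖ := by
    simpa [Real.norm_eq_abs] using hfx
  have hxbound : ε * ‖x - a‖ ≤ ε * (C * τ) := mul_le_mul_of_nonneg_left hxa' hεpos.le
  have hcontr : (0:ℝ) ≤ -(δ * τ) + M * (ε * (C * τ)) + ε * (C * τ) := by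
    have h1 : 0 ≤ f x - f a := by linarith
    have h2 : f' (x - a) = μ i₀ * τ - ∑ i, μ i * (Φ i x - Φ i a - Φ' i (x - a)) := by
      rw [hder, hsum1]
    have h3 := abs_le.1 herr
    have h4 := abs_le.1 hfb
    have h5 : M * (ε * ‖x - a‖) ≤ M * (ε * (C * τ)) :=
      mul_le_mul_of_nonneg_left hxbound hM0
    have h6 : μ i₀ * τ = -(δ * τ) := by rw [hδ]; ring
    linarith
  have hhalf : ε * C * (1 + M) = δ / 2 := by
    rw [hε]; field_simp
  have h8 : M * (ε * (C * τ)) + ε * (C * τ) = (δ / 2) * τ := by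
    have h7 : M * (ε * (C * τ)) + ε * (C * τ) = (ε * C * (1 + M)) * τ := by ring
    rw [h7, hhalf]
  have h9 : 0 < δ * τ := mul_pos hδpos hτpos
  have h10 : δ / 2 * τ = δ * τ / 2 := by ring
  clear_value δ ε M τ
  linarith [hcontr, h8, h9, h10]

-- (selᵀ *ᵥ w) is extension-by-zero
theorem sel_transpose_mulVec {k : ℕ} (p : Fin k → Prop) (w : {i // p i} → ℝ) (i : Fin k) :
    ((sel p)ᵀ *ᵥ w) i = if h : p i then w ⟨i, h⟩ else 0 := by
  simp only [Matrix.mulVec, dotProduct, Matrix.transpose_apply, sel, Matrix.of_apply]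
  by_cases h : p i
  · rw [dif_pos h]
    rw [Finset.sum_eq_single ⟨i, h⟩]
    · simp
    · intro b _ hb
      rw [if_neg, zero_mul]
      intro hc; exact hb (Subtype.ext hc)
    · intro hb; exact absurd (Finset.mem_univ _) hb
  · rw [dif_neg h]
    apply Finset.sum_eq_zero
    intro b _
    rw [if_neg, zero_mul]
    intro hc; exact h (hc ▸ b.2)

theorem sum_dite_subtype {k : ℕ} (p : Fin k → Prop) [Fintype {j // p j}] (g : Fin k → ℝ) (c : {j // p j} → ℝ) :
    ∑ j : Fin k, (if h : p j then c ⟨j, h⟩ else 0) * g j = ∑ j : {j // p j}, c j * g j := by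
  rw [← Finset.sum_filter_add_sum_filter_not Finset.univ p]
  have h2 : ∑ j ∈ Finset.univ.filter (fun j => ¬ p j),
      (if h : p j then c ⟨j, h⟩ else 0) * g j = 0 := by
    apply Finset.sum_eq_zero
    intro j hj
    rw [Finset.mem_filter] at hj
    rw [dif_neg hj.2, zero_mul]
  rw [h2, add_zero]
  rw [Finset.sum_subtype (p := p) (Finset.univ.filter p) (fun x => by simp) (fun j => (if h : p j then c ⟨j, h⟩ else 0) * g j)]
  apply Finset.sum_congr rfl
  intro j _
  rw [dif_pos j.2]

theorem sum_subtype_single {k : ℕ} (p : Fin k → Prop) [Fintype {j // p j}] (c : {j // p j} → ℝ) (i : Fin k) :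
    ∑ j : {j // p j}, c j * (if (j : Fin k) = i then (1:ℝ) else 0) =
      if h : p i then c ⟨i, h⟩ else 0 := by
  rw [← sum_dite_subtype p (fun x => if x = i then (1:ℝ) else 0) c]
  simp [mul_ite, Finset.sum_ite_eq']

-- decomposition of a continuous linear map on a product of pi types
theorem clm_decomp {n s m : ℕ} (D : ((Fin n → ℝ) × (Fin s → ℝ)) →L[ℝ] (Fin m → ℝ))
    (wt : Fin n → ℝ) (wz : Fin s → ℝ) (k : Fin m) :
    D (wt, wz) k = ∑ j, wt j * D (Pi.single j 1, 0) k + ∑ j, wz j * D (0, Pi.single j 1) k := by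
  have hpi : ∀ {N : ℕ} (w : Fin N → ℝ), w = ∑ j, w j • (Pi.single j 1 : Fin N → ℝ) := by
    intro N w
    ext x
    simp [Pi.single_apply, Finset.sum_apply, mul_ite, Finset.sum_ite_eq']
  have h1 : (wt, wz) = (∑ j, wt j • ((Pi.single j 1 : Fin n → ℝ), (0 : Fin s → ℝ)))
      + ∑ j, wz j • ((0 : Fin n → ℝ), (Pi.single j 1 : Fin s → ℝ))  := by
    rw [Prod.ext_iff]
    constructor
    · simp only [Prod.fst_add, Prod.fst_sum, Prod.smul_mk, smul_zero]
      rw [← hpi wt]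
      simp
    · simp only [Prod.snd_add, Prod.snd_sum, Prod.smul_mk, smul_zero]
      rw [← hpi wz]
      simp
  rw [h1, map_add, map_sum, map_sum]
  simp only [_root_.map_smul]
  simp [Finset.sum_apply, smul_eq_mul]

theorem rank_full_row_surj {ρ ν : Type*} [Fintype ρ] [Fintype ν] [DecidableEq ρ] [DecidableEq ν]
    (M : Matrix ρ ν ℝ) (h : M.rank = Fintype.card ρ) :
    Function.Surjective M.mulVecLin := by
  rw [← LinearMap.range_eq_top]
  apply Submodule.eq_top_of_finrank_eq
  rw [← Matrix.rank, h, Module.finrank_pi]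

def mat1 {n s m : ℕ} (D : ((Fin n → ℝ) × (Fin s → ℝ)) →L[ℝ] (Fin m → ℝ)) :
    Matrix (Fin m) (Fin n) ℝ := Matrix.of fun i j => D (Pi.single j 1, 0) i

def mat2 {n s m : ℕ} (D : ((Fin n → ℝ) × (Fin s → ℝ)) →L[ℝ] (Fin m → ℝ)) :
    Matrix (Fin m) (Fin s) ℝ := Matrix.of fun i j => D (0, Pi.single j 1) i

theorem clm_eq {n s m : ℕ} (D : ((Fin n → ℝ) × (Fin s → ℝ)) →L[ℝ] (Fin m → ℝ))
    (wt : Fin n → ℝ) (wz : Fin s → ℝ) :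
    D (wt, wz) = mat1 D *ᵥ wt + mat2 D *ᵥ wz := by
  funext k
  rw [Pi.add_apply, clm_decomp]
  congr 1
  · rw [Matrix.mulVec]
    exact Finset.sum_congr rfl fun j _ => mul_comm _ _
  · rw [Matrix.mulVec]
    exact Finset.sum_congr rfl fun j _ => mul_comm _ _

def Lmap (n s : ℕ) : ((Fin n → ℝ) × (Fin s → ℝ) × (Fin s → ℝ)) →L[ℝ] ((Fin n → ℝ) × (Fin s → ℝ)) :=
  (ContinuousLinearMap.fst ℝ (Fin n → ℝ) ((Fin s → ℝ) × (Fin s → ℝ))).prod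
    ((ContinuousLinearMap.fst ℝ (Fin s → ℝ) (Fin s → ℝ) +
      ContinuousLinearMap.snd ℝ (Fin s → ℝ) (Fin s → ℝ)).comp
      (ContinuousLinearMap.snd ℝ (Fin n → ℝ) ((Fin s → ℝ) × (Fin s → ℝ))))

def PUmap (n s : ℕ) : ((Fin n → ℝ) × (Fin s → ℝ) × (Fin s → ℝ)) →L[ℝ] (Fin s → ℝ) :=
  (ContinuousLinearMap.fst ℝ (Fin s → ℝ) (Fin s → ℝ)).comp
    (ContinuousLinearMap.snd ℝ (Fin n → ℝ) ((Fin s → ℝ) × (Fin s → ℝ)))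

def PVmap (n s : ℕ) : ((Fin n → ℝ) × (Fin s → ℝ) × (Fin s → ℝ)) →L[ℝ] (Fin s → ℝ) :=
  (ContinuousLinearMap.snd ℝ (Fin s → ℝ) (Fin s → ℝ)).comp
    (ContinuousLinearMap.snd ℝ (Fin n → ℝ) ((Fin s → ℝ) × (Fin s → ℝ)))

/-- index type for the active constraints -/
abbrev Idx (m₁ m₂ s : ℕ) (act : Fin m₂ → Prop) (pu pv : Fin s → Prop) : Type :=
  Fin m₁ ⊕ ({j // act j} ⊕ (Fin s ⊕ ({i // ¬ pu i} ⊕ {i // ¬ pv i})))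

/-- the active constraint functions -/
def Phi {n s m₁ m₂ : ℕ} (cE : (Fin n → ℝ) × (Fin s → ℝ) → Fin m₁ → ℝ)
    (cI : (Fin n → ℝ) × (Fin s → ℝ) → Fin m₂ → ℝ)
    (cZ : (Fin n → ℝ) × (Fin s → ℝ) → Fin s → ℝ)
    (act : Fin m₂ → Prop) (pu pv : Fin s → Prop) :
    Idx m₁ m₂ s act pu pv → ((Fin n → ℝ) × (Fin s → ℝ) × (Fin s → ℝ)) → ℝ
  | .inl k => fun q => cE (q.1, q.2.1 + q.2.2) k
  | .inr (.inl j) => fun q => cI (q.1, q.2.1 + q.2.2) j.val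
  | .inr (.inr (.inl i)) => fun q => cZ (q.1, q.2.1 + q.2.2) i - q.2.1 i + q.2.2 i
  | .inr (.inr (.inr (.inl i))) => fun q => q.2.1 i.val
  | .inr (.inr (.inr (.inr i))) => fun q => q.2.2 i.val

/-- derivatives of the active constraint functions -/
def Phi' {n s m₁ m₂ : ℕ} (DE : ((Fin n → ℝ) × (Fin s → ℝ)) →L[ℝ] (Fin m₁ → ℝ))
    (DI : ((Fin n → ℝ) × (Fin s → ℝ)) →L[ℝ] (Fin m₂ → ℝ))
    (DZ : ((Fin n → ℝ) × (Fin s → ℝ)) →L[ℝ] (Fin s → ℝ))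
    (act : Fin m₂ → Prop) (pu pv : Fin s → Prop) :
    Idx m₁ m₂ s act pu pv → (((Fin n → ℝ) × (Fin s → ℝ) × (Fin s → ℝ)) →L[ℝ] ℝ)
  | .inl k => (ContinuousLinearMap.proj k).comp (DE.comp (Lmap n s))
  | .inr (.inl j) => (ContinuousLinearMap.proj j.val).comp (DI.comp (Lmap n s))
  | .inr (.inr (.inl i)) =>
      (ContinuousLinearMap.proj i).comp (DZ.comp (Lmap n s)) -
      (ContinuousLinearMap.proj i).comp (PUmap n s) +
      (ContinuousLinearMap.proj i).comp (PVmap n s)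
  | .inr (.inr (.inr (.inl i))) => (ContinuousLinearMap.proj i.val).comp (PUmap n s)
  | .inr (.inr (.inr (.inr i))) => (ContinuousLinearMap.proj i.val).comp (PVmap n s)

theorem phi_strict {n s m₁ m₂ : ℕ} {cE : (Fin n → ℝ) × (Fin s → ℝ) → Fin m₁ → ℝ}
    {cI : (Fin n → ℝ) × (Fin s → ℝ) → Fin m₂ → ℝ}
    {cZ : (Fin n → ℝ) × (Fin s → ℝ) → Fin s → ℝ}
    {DE : ((Fin n → ℝ) × (Fin s → ℝ)) →L[ℝ] (Fin m₁ → ℝ)}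
    {DI : ((Fin n → ℝ) × (Fin s → ℝ)) →L[ℝ] (Fin m₂ → ℝ)}
    {DZ : ((Fin n → ℝ) × (Fin s → ℝ)) →L[ℝ] (Fin s → ℝ)}
    (act : Fin m₂ → Prop) (pu pv : Fin s → Prop)
    (a : (Fin n → ℝ) × (Fin s → ℝ) × (Fin s → ℝ))
    (hDE : HasStrictFDerivAt cE DE (a.1, a.2.1 + a.2.2))
    (hDI : HasStrictFDerivAt cI DI (a.1, a.2.1 + a.2.2))
    (hDZ : HasStrictFDerivAt cZ DZ (a.1, a.2.1 + a.2.2)) :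
    ∀ i, HasStrictFDerivAt (Phi cE cI cZ act pu pv i) (Phi' DE DI DZ act pu pv i) a := by
  have hL : HasStrictFDerivAt (Lmap n s) (Lmap n s) a := (Lmap n s).hasStrictFDerivAt
  have hLa : (Lmap n s) a = (a.1, a.2.1 + a.2.2) := rfl
  intro i
  match i with
  | .inl k =>
      exact (ContinuousLinearMap.proj k).hasStrictFDerivAt.comp a
        ((hLa ▸ hDE).comp a hL)
  | .inr (.inl j) =>
      exact (ContinuousLinearMap.proj j.val).hasStrictFDerivAt.comp a
        ((hLa ▸ hDI).comp a hL)
  | .inr (.inr (.inl i)) =>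
      have h1 : HasStrictFDerivAt (fun q : (Fin n → ℝ) × (Fin s → ℝ) × (Fin s → ℝ) =>
          cZ (q.1, q.2.1 + q.2.2) i)
          ((ContinuousLinearMap.proj i).comp (DZ.comp (Lmap n s))) a :=
        (ContinuousLinearMap.proj i).hasStrictFDerivAt.comp a ((hLa ▸ hDZ).comp a hL)
      have h2 : HasStrictFDerivAt (fun q : (Fin n → ℝ) × (Fin s → ℝ) × (Fin s → ℝ) => q.2.1 i)
          ((ContinuousLinearMap.proj i).comp (PUmap n s)) a :=
        ((ContinuousLinearMap.proj i).comp (PUmap n s)).hasStrictFDerivAt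
      have h3 : HasStrictFDerivAt (fun q : (Fin n → ℝ) × (Fin s → ℝ) × (Fin s → ℝ) => q.2.2 i)
          ((ContinuousLinearMap.proj i).comp (PVmap n s)) a :=
        ((ContinuousLinearMap.proj i).comp (PVmap n s)).hasStrictFDerivAt
      exact (h1.sub h2).add h3
  | .inr (.inr (.inr (.inl i))) =>
      exact ((ContinuousLinearMap.proj i.val).comp (PUmap n s)).hasStrictFDerivAt
  | .inr (.inr (.inr (.inr i))) =>
      exact ((ContinuousLinearMap.proj i.val).comp (PVmap n s)).hasStrictFDerivAt

set_option maxHeartbeats 1000000 in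
theorem phi_surj {n s m₁ m₂ : ℕ} (DE : ((Fin n → ℝ) × (Fin s → ℝ)) →L[ℝ] (Fin m₁ → ℝ))
    (DI : ((Fin n → ℝ) × (Fin s → ℝ)) →L[ℝ] (Fin m₂ → ℝ))
    (DZ : ((Fin n → ℝ) × (Fin s → ℝ)) →L[ℝ] (Fin s → ℝ))
    (act : Fin m₂ → Prop) (pu pv : Fin s → Prop)
    (hrank : (Matrix.fromRows
        (Matrix.fromCols (mat1 DE)
          (Matrix.fromCols (mat2 DE * (sel pu)ᵀ) (mat2 DE * (sel pv)ᵀ)))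
        (Matrix.fromRows
          (Matrix.fromCols (sel act * mat1 DI)
            (Matrix.fromCols (sel act * mat2 DI * (sel pu)ᵀ) (sel act * mat2 DI * (sel pv)ᵀ)))
          (Matrix.fromCols (mat1 DZ)
            (Matrix.fromCols ((mat2 DZ - 1) * (sel pu)ᵀ) ((mat2 DZ + 1) * (sel pv)ᵀ))))).rank
      = m₁ + Fintype.card {j // act j} + s) :
    LinearMap.range (ContinuousLinearMap.pi (Phi' DE DI DZ act pu pv) :
      ((Fin n → ℝ) × (Fin s → ℝ) × (Fin s → ℝ)) →ₗ[ℝ] (Idx m₁ m₂ s act pu pv → ℝ)) = ⊤ := by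
  rw [LinearMap.range_eq_top]
  intro b
  set M := (Matrix.fromRows
        (Matrix.fromCols (mat1 DE)
          (Matrix.fromCols (mat2 DE * (sel pu)ᵀ) (mat2 DE * (sel pv)ᵀ)))
        (Matrix.fromRows
          (Matrix.fromCols (sel act * mat1 DI)
            (Matrix.fromCols (sel act * mat2 DI * (sel pu)ᵀ) (sel act * mat2 DI * (sel pv)ᵀ)))
          (Matrix.fromCols (mat1 DZ)
            (Matrix.fromCols ((mat2 DZ - 1) * (sel pu)ᵀ) ((mat2 DZ + 1) * (sel pv)ᵀ))))) with hM
  have hMsurj : Function.Surjective M.mulVecLin := by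
    apply rank_full_row_surj
    rw [hrank]
    simp [Fintype.card_sum]
    ring
  -- fixed parts
  set u₀ : Fin s → ℝ := fun i => if h : pu i then 0
    else b (.inr (.inr (.inr (.inl ⟨i, h⟩)))) with hu₀
  set v₀ : Fin s → ℝ := fun i => if h : pv i then 0
    else b (.inr (.inr (.inr (.inr ⟨i, h⟩)))) with hv₀
  set c : (Fin m₁ ⊕ ({j // act j} ⊕ Fin s)) → ℝ := Sum.elim
      (fun k => b (.inl k) - DE (0, u₀ + v₀) k)
      (Sum.elim (fun j => b (.inr (.inl j)) - DI (0, u₀ + v₀) j.val)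
        (fun i => b (.inr (.inr (.inl i))) - (DZ (0, u₀ + v₀) i - u₀ i + v₀ i))) with hc
  obtain ⟨w, hw⟩ := hMsurj c
  rw [Matrix.mulVecLin_apply] at hw
  set xt : Fin n → ℝ := fun j => w (.inl j) with hxt
  set wU : {i // pu i} → ℝ := fun i => w (.inr (.inl i)) with hwU
  set wV : {i // pv i} → ℝ := fun i => w (.inr (.inr i)) with hwV
  set xu : Fin s → ℝ := fun i => if h : pu i then wU ⟨i, h⟩ else u₀ i with hxu
  set xv : Fin s → ℝ := fun i => if h : pv i then wV ⟨i, h⟩ else v₀ i with hxv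
  have hwelim : w = Sum.elim xt (Sum.elim wU wV) := by
    funext x; rcases x with x | (x | x) <;> rfl
  have hxueq : xu = (sel pu)ᵀ *ᵥ wU + u₀ := by
    funext i
    rw [Pi.add_apply, sel_transpose_mulVec]
    by_cases h : pu i
    · rw [hxu]; dsimp only; rw [dif_pos h, dif_pos h, hu₀]; dsimp only; rw [dif_pos h, add_zero]
    · rw [hxu]; dsimp only; rw [dif_neg h, dif_neg h, zero_add]
  have hxveq : xv = (sel pv)ᵀ *ᵥ wV + v₀ := by
    funext i
    rw [Pi.add_apply, sel_transpose_mulVec]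
    by_cases h : pv i
    · rw [hxv]; dsimp only; rw [dif_pos h, dif_pos h, hv₀]; dsimp only; rw [dif_pos h, add_zero]
    · rw [hxv]; dsimp only; rw [dif_neg h, dif_neg h, zero_add]
  refine ⟨(xt, xu, xv), ?_⟩
  have hsum : xu + xv = ((sel pu)ᵀ *ᵥ wU + (sel pv)ᵀ *ᵥ wV) + (u₀ + v₀) := by
    rw [hxueq, hxveq]; abel
  -- generic evaluation of a `D` at our point
  have hDval : ∀ {m : ℕ} (D : ((Fin n → ℝ) × (Fin s → ℝ)) →L[ℝ] (Fin m → ℝ)),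
      D (xt, xu + xv) = mat1 D *ᵥ xt + (mat2 D * (sel pu)ᵀ) *ᵥ wU +
        (mat2 D * (sel pv)ᵀ) *ᵥ wV + D (0, u₀ + v₀) := by
    intro m D
    rw [clm_eq D xt (xu + xv), hsum, Matrix.mulVec_add, Matrix.mulVec_add,
      ← Matrix.mulVec_mulVec, ← Matrix.mulVec_mulVec, clm_eq D 0 (u₀ + v₀),
      Matrix.mulVec_zero]
    abel
  ext i
  rw [ContinuousLinearMap.coe_coe, ContinuousLinearMap.pi_apply]
  rw [hwelim] at hw
  match i with
  | .inl k =>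
      have hrow := congrFun hw (Sum.inl k)
      rw [hM, Matrix.fromRows_mulVec] at hrow
      simp only [Sum.elim_inl, Matrix.fromCols_mulVec_sumElim] at hrow
      have : Phi' DE DI DZ act pu pv (.inl k) (xt, xu, xv) = DE (xt, xu + xv) k := rfl
      rw [this, hDval DE]
      simp only [Pi.add_apply] at hrow ⊢
      rw [hc] at hrow
      simp only [Sum.elim_inl] at hrow
      linarith
  | .inr (.inl j) =>
      have hrow := congrFun hw (Sum.inr (Sum.inl j))
      rw [hM, Matrix.fromRows_mulVec] at hrow
      simp only [Sum.elim_inr, Matrix.fromRows_mulVec, Sum.elim_inl,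
        Matrix.fromCols_mulVec_sumElim] at hrow
      have heq : Phi' DE DI DZ act pu pv (.inr (.inl j)) (xt, xu, xv)
          = DI (xt, xu + xv) j.val := rfl
      rw [heq, hDval DI]
      rw [hc] at hrow
      simp only [Sum.elim_inr, Sum.elim_inl] at hrow
      -- extract row j.val through the selection matrix
      have hselv : ∀ (z : Fin m₂ → ℝ), (sel act *ᵥ z) j = z j.val := by
        intro z
        simp only [Matrix.mulVec, dotProduct, sel, Matrix.of_apply]
        rw [Finset.sum_eq_single j.val]
        · simp
        · intro b' _ hb; rw [if_neg (fun hc' => hb hc'.symm), zero_mul]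
        · intro hb; exact absurd (Finset.mem_univ _) hb
      rw [Matrix.mul_assoc (sel act) (mat2 DI) ((sel pu)ᵀ),
        Matrix.mul_assoc (sel act) (mat2 DI) ((sel pv)ᵀ)] at hrow
      rw [← Matrix.mulVec_mulVec xt (sel act) (mat1 DI),
        ← Matrix.mulVec_mulVec wU (sel act) (mat2 DI * (sel pu)ᵀ),
        ← Matrix.mulVec_mulVec wV (sel act) (mat2 DI * (sel pv)ᵀ)] at hrow
      simp only [Pi.add_apply, hselv] at hrow
      simp only [Pi.add_apply]
      linarith
  | .inr (.inr (.inl i)) =>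
      have hrow := congrFun hw (Sum.inr (Sum.inr i))
      rw [hM, Matrix.fromRows_mulVec] at hrow
      simp only [Sum.elim_inr, Matrix.fromRows_mulVec,
        Matrix.fromCols_mulVec_sumElim] at hrow
      simp only [Matrix.sub_mul, Matrix.add_mul, Matrix.one_mul, Matrix.sub_mulVec,
        Matrix.add_mulVec] at hrow
      have heq : Phi' DE DI DZ act pu pv (.inr (.inr (.inl i))) (xt, xu, xv)
          = DZ (xt, xu + xv) i - xu i + xv i := rfl
      rw [heq, hDval DZ, hxueq, hxveq]
      rw [hc] at hrow
      simp only [Sum.elim_inr, Sum.elim_inl, Pi.add_apply, Pi.sub_apply] at hrow ⊢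
      linarith
  | .inr (.inr (.inr (.inl i))) =>
      have : Phi' DE DI DZ act pu pv (.inr (.inr (.inr (.inl i)))) (xt, xu, xv)
          = xu i.val := rfl
      rw [this, hxu]
      dsimp only
      rw [dif_neg i.2, hu₀]
      dsimp only
      rw [dif_neg i.2]
  | .inr (.inr (.inr (.inr i))) =>
      have : Phi' DE DI DZ act pu pv (.inr (.inr (.inr (.inr i)))) (xt, xu, xv)
          = xv i.val := rfl
      rw [this, hxv]
      dsimp only
      rw [dif_neg i.2, hv₀]
      dsimp only
      rw [dif_neg i.2]

end Helpers

set_option maxHeartbeats 3000000 in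
/-- First order necessary optimality conditions (S-stationarity) for the counterpart
MPCC under MPCC-LICQ. -/
theorem stmt11 {n s m₁ m₂ : ℕ}
    (Dt : Set (Fin n → ℝ)) (Dz : Set (Fin s → ℝ))
    (hDt : IsOpen Dt) (hDz : IsOpen Dz)
    (hsym : ∀ z ∈ Dz, ∀ σ : Fin s → ℝ, (∀ i, σ i = -1 ∨ σ i = 0 ∨ σ i = 1) →
      (fun i => σ i * z i) ∈ Dz)
    (f : (Fin n → ℝ) → ℝ)
    (cE : (Fin n → ℝ) × (Fin s → ℝ) → Fin m₁ → ℝ)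
    (cI : (Fin n → ℝ) × (Fin s → ℝ) → Fin m₂ → ℝ)
    (cZ : (Fin n → ℝ) × (Fin s → ℝ) → Fin s → ℝ)
    (hf : ContDiffOn ℝ 1 f Dt)
    (hcE : ContDiffOn ℝ 1 cE (Dt ×ˢ Dz))
    (hcI : ContDiffOn ℝ 1 cI (Dt ×ˢ Dz))
    (hcZ : ContDiffOn ℝ 1 cZ (Dt ×ˢ Dz))
    (tstar : Fin n → ℝ) (ustar vstar : Fin s → ℝ)
    (ht : tstar ∈ Dt) (huv : ustar + vstar ∈ Dz)
    (hu : ∀ i, 0 ≤ ustar i) (hv : ∀ i, 0 ≤ vstar i)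
    (hcompl : ∀ i, ustar i * vstar i = 0)
    (hfeasE : cE (tstar, ustar + vstar) = 0)
    (hfeasI : ∀ j, 0 ≤ cI (tstar, ustar + vstar) j)
    (hfeasZ : cZ (tstar, ustar + vstar) = ustar - vstar)
    (hmin : IsLocalMinOn
      (fun q : (Fin n → ℝ) × (Fin s → ℝ) × (Fin s → ℝ) => f q.1)
      {q | q.1 ∈ Dt ∧ q.2.1 + q.2.2 ∈ Dz ∧ (∀ i, 0 ≤ q.2.1 i) ∧ (∀ i, 0 ≤ q.2.2 i) ∧
        (∀ i, q.2.1 i * q.2.2 i = 0) ∧ cE (q.1, q.2.1 + q.2.2) = 0 ∧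
        (∀ j, 0 ≤ cI (q.1, q.2.1 + q.2.2) j) ∧
        cZ (q.1, q.2.1 + q.2.2) = q.2.1 - q.2.2}
      (tstar, ustar, vstar))
    (hLICQ :
      (Matrix.fromRows
        (Matrix.fromCols (jac1 cE (tstar, ustar + vstar))
          (Matrix.fromCols
            (jac2 cE (tstar, ustar + vstar) * (sel fun i => 0 < ustar i)ᵀ)
            (jac2 cE (tstar, ustar + vstar) * (sel fun i => 0 < vstar i)ᵀ)))
        (Matrix.fromRows
          (Matrix.fromCols
            (sel (fun j => cI (tstar, ustar + vstar) j = 0) * jac1 cI (tstar, ustar + vstar))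
            (Matrix.fromCols
              (sel (fun j => cI (tstar, ustar + vstar) j = 0) *
                jac2 cI (tstar, ustar + vstar) * (sel fun i => 0 < ustar i)ᵀ)
              (sel (fun j => cI (tstar, ustar + vstar) j = 0) *
                jac2 cI (tstar, ustar + vstar) * (sel fun i => 0 < vstar i)ᵀ)))
          (Matrix.fromCols (jac1 cZ (tstar, ustar + vstar))
            (Matrix.fromCols
              ((jac2 cZ (tstar, ustar + vstar) - 1) * (sel fun i => 0 < ustar i)ᵀ)
              ((jac2 cZ (tstar, ustar + vstar) + 1) * (sel fun i => 0 < vstar i)ᵀ))))).rank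
      = m₁ + Fintype.card {j // cI (tstar, ustar + vstar) j = 0} + s) :
    ∃ (lE : Fin m₁ → ℝ) (lI : Fin m₂ → ℝ) (lZ : Fin s → ℝ) (μu μv : Fin s → ℝ),
      (fun j => fderiv ℝ f tstar (Pi.single j 1)) +
        (jac1 cE (tstar, ustar + vstar))ᵀ *ᵥ lE -
        (jac1 cI (tstar, ustar + vstar))ᵀ *ᵥ lI +
        (jac1 cZ (tstar, ustar + vstar))ᵀ *ᵥ lZ = 0 ∧
      (jac2 cE (tstar, ustar + vstar))ᵀ *ᵥ lE -
        (jac2 cI (tstar, ustar + vstar))ᵀ *ᵥ lI +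
        (jac2 cZ (tstar, ustar + vstar) - 1)ᵀ *ᵥ lZ - μu = 0 ∧
      (jac2 cE (tstar, ustar + vstar))ᵀ *ᵥ lE -
        (jac2 cI (tstar, ustar + vstar))ᵀ *ᵥ lI +
        (jac2 cZ (tstar, ustar + vstar) + 1)ᵀ *ᵥ lZ - μv = 0 ∧
      (∀ i, ustar i = 0 ∧ vstar i = 0 → 0 ≤ μu i ∧ 0 ≤ μv i) ∧
      (∀ i, 0 < ustar i → μu i = 0) ∧
      (∀ i, 0 < vstar i → μv i = 0) ∧
      (∀ j, 0 ≤ lI j) ∧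
      lI ⬝ᵥ cI (tstar, ustar + vstar) = 0 := by
  classical
  have hmemEZ : (Dt ×ˢ Dz) ∈ 𝓝 (tstar, ustar + vstar) :=
    (hDt.prod hDz).mem_nhds (Set.mk_mem_prod ht huv)
  set DE := fderiv ℝ cE (tstar, ustar + vstar) with hDEdef
  set DI := fderiv ℝ cI (tstar, ustar + vstar) with hDIdef
  set DZs := fderiv ℝ cZ (tstar, ustar + vstar) with hDZdef
  set Df := fderiv ℝ f tstar with hDfdef
  have hDE : HasStrictFDerivAt cE DE (tstar, ustar + vstar) :=
    (hcE.contDiffAt hmemEZ).hasStrictFDerivAt one_ne_zero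
  have hDI : HasStrictFDerivAt cI DI (tstar, ustar + vstar) :=
    (hcI.contDiffAt hmemEZ).hasStrictFDerivAt one_ne_zero
  have hDZ : HasStrictFDerivAt cZ DZs (tstar, ustar + vstar) :=
    (hcZ.contDiffAt hmemEZ).hasStrictFDerivAt one_ne_zero
  have hDf : HasStrictFDerivAt f Df tstar :=
    (hf.contDiffAt (hDt.mem_nhds ht)).hasStrictFDerivAt one_ne_zero
  set a : (Fin n → ℝ) × (Fin s → ℝ) × (Fin s → ℝ) := (tstar, ustar, vstar) with hadef
  set act : Fin m₂ → Prop := fun j => cI (tstar, ustar + vstar) j = 0 with hact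
  set pu : Fin s → Prop := fun i => 0 < ustar i with hpu
  set pv : Fin s → Prop := fun i => 0 < vstar i with hpv
  -- jacobian identifications
  have hJE1 : jac1 cE (tstar, ustar + vstar) = mat1 DE := rfl
  have hJE2 : jac2 cE (tstar, ustar + vstar) = mat2 DE := rfl
  have hJI1 : jac1 cI (tstar, ustar + vstar) = mat1 DI := rfl
  have hJI2 : jac2 cI (tstar, ustar + vstar) = mat2 DI := rfl
  have hJZ1 : jac1 cZ (tstar, ustar + vstar) = mat1 DZs := rfl
  have hJZ2 : jac2 cZ (tstar, ustar + vstar) = mat2 DZs := rfl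
  -- the objective
  set F' : ((Fin n → ℝ) × (Fin s → ℝ) × (Fin s → ℝ)) →L[ℝ] ℝ :=
    Df.comp (ContinuousLinearMap.fst ℝ (Fin n → ℝ) ((Fin s → ℝ) × (Fin s → ℝ))) with hF'def
  have hF : HasStrictFDerivAt (fun q : (Fin n → ℝ) × (Fin s → ℝ) × (Fin s → ℝ) => f q.1) F' a :=
    hDf.comp a (ContinuousLinearMap.fst ℝ (Fin n → ℝ)
      ((Fin s → ℝ) × (Fin s → ℝ))).hasStrictFDerivAt
  -- strict differentiability of the active constraints
  have hPhiStrict : ∀ i, HasStrictFDerivAt (Phi cE cI cZ act pu pv i)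
      (Phi' DE DI DZs act pu pv i) a :=
    phi_strict act pu pv a hDE hDI hDZ
  -- the active constraints vanish at a
  have hPhia : ∀ i, Phi cE cI cZ act pu pv i a = 0 := by
    intro i
    match i with
    | .inl k =>
        show cE (tstar, ustar + vstar) k = 0
        rw [hfeasE]; rfl
    | .inr (.inl j) => exact j.2
    | .inr (.inr (.inl i)) =>
        show cZ (tstar, ustar + vstar) i - ustar i + vstar i = 0
        have := congrFun hfeasZ i
        rw [Pi.sub_apply] at this
        rw [this]; ring
    | .inr (.inr (.inr (.inl iu))) =>
        exact le_antisymm (not_lt.1 iu.2) (hu iu.val)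
    | .inr (.inr (.inr (.inr iv))) =>
        exact le_antisymm (not_lt.1 iv.2) (hv iv.val)
  -- surjectivity of the constraint gradients
  have hsurj : LinearMap.range (ContinuousLinearMap.pi (Phi' DE DI DZs act pu pv) :
      ((Fin n → ℝ) × (Fin s → ℝ) × (Fin s → ℝ)) →ₗ[ℝ] (Idx m₁ m₂ s act pu pv → ℝ)) = ⊤ := by
    apply phi_surj
    exact hLICQ
  -- nearby properties
  have hnear1 : ∀ᶠ q : (Fin n → ℝ) × (Fin s → ℝ) × (Fin s → ℝ) in 𝓝 a, q.1 ∈ Dt :=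
    continuous_fst.continuousAt (hDt.mem_nhds ht)
  have hnear2 : ∀ᶠ q : (Fin n → ℝ) × (Fin s → ℝ) × (Fin s → ℝ) in 𝓝 a,
      q.2.1 + q.2.2 ∈ Dz := by
    have hcont : Continuous (fun q : (Fin n → ℝ) × (Fin s → ℝ) × (Fin s → ℝ) =>
        q.2.1 + q.2.2) := (continuous_fst.comp continuous_snd).add
      (continuous_snd.comp continuous_snd)
    exact hcont.continuousAt (hDz.mem_nhds huv)
  have hnear3 : ∀ᶠ q : (Fin n → ℝ) × (Fin s → ℝ) × (Fin s → ℝ) in 𝓝 a,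
      ∀ j, ¬ act j → 0 < cI (q.1, q.2.1 + q.2.2) j := by
    rw [Filter.eventually_all]
    intro j
    by_cases hj : act j
    · exact Filter.Eventually.of_forall (fun q h => absurd hj h)
    · have hpos : 0 < cI (tstar, ustar + vstar) j := (hfeasI j).lt_of_ne (Ne.symm hj)
      have hcont : ContinuousAt (fun q : (Fin n → ℝ) × (Fin s → ℝ) × (Fin s → ℝ) =>
          cI (q.1, q.2.1 + q.2.2) j) a := by
        apply ContinuousAt.comp (continuous_apply j).continuousAt
        apply ContinuousAt.comp
        · exact (hcI.contDiffAt hmemEZ).continuousAt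
        · exact ((Lmap n s).continuous).continuousAt
      have := hcont (Ioi_mem_nhds hpos)
      filter_upwards [this] with q hq _
      exact hq
  have hnear4 : ∀ᶠ q : (Fin n → ℝ) × (Fin s → ℝ) × (Fin s → ℝ) in 𝓝 a,
      ∀ i, pu i → 0 < q.2.1 i := by
    rw [Filter.eventually_all]
    intro i
    by_cases hi : pu i
    · have hcont : ContinuousAt (fun q : (Fin n → ℝ) × (Fin s → ℝ) × (Fin s → ℝ) =>
          q.2.1 i) a := ((continuous_apply i).comp
        (continuous_fst.comp continuous_snd)).continuousAt
      have := hcont (Ioi_mem_nhds hi)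
      filter_upwards [this] with q hq _
      exact hq
    · exact Filter.Eventually.of_forall (fun q h => absurd h hi)
  have hnear5 : ∀ᶠ q : (Fin n → ℝ) × (Fin s → ℝ) × (Fin s → ℝ) in 𝓝 a,
      ∀ i, pv i → 0 < q.2.2 i := by
    rw [Filter.eventually_all]
    intro i
    by_cases hi : pv i
    · have hcont : ContinuousAt (fun q : (Fin n → ℝ) × (Fin s → ℝ) × (Fin s → ℝ) =>
          q.2.2 i) a := ((continuous_apply i).comp
        (continuous_snd.comp continuous_snd)).continuousAt
      have := hcont (Ioi_mem_nhds hi)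
      filter_upwards [this] with q hq _
      exact hq
    · exact Filter.Eventually.of_forall (fun q h => absurd h hi)
  have hmin' : ∀ᶠ q : (Fin n → ℝ) × (Fin s → ℝ) × (Fin s → ℝ) in 𝓝 a,
      (q.1 ∈ Dt ∧ q.2.1 + q.2.2 ∈ Dz ∧ (∀ i, 0 ≤ q.2.1 i) ∧ (∀ i, 0 ≤ q.2.2 i) ∧
        (∀ i, q.2.1 i * q.2.2 i = 0) ∧ cE (q.1, q.2.1 + q.2.2) = 0 ∧
        (∀ j, 0 ≤ cI (q.1, q.2.1 + q.2.2) j) ∧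
        cZ (q.1, q.2.1 + q.2.2) = q.2.1 - q.2.2) → f tstar ≤ f q.1 :=
    eventually_nhdsWithin_iff.1 hmin
  -- the two branch inequality-index sets
  set I₁ : Set (Idx m₁ m₂ s act pu pv) := {i | match i with
    | .inr (.inl _) => True
    | .inr (.inr (.inr (.inl iu))) => ¬ pv iu.val
    | _ => False} with hI₁
  set I₂ : Set (Idx m₁ m₂ s act pu pv) := {i | match i with
    | .inr (.inl _) => True
    | .inr (.inr (.inr (.inr iv))) => ¬ pu iv.val
    | _ => False} with hI₂
  have husv : ∀ i : Fin s, pv i → ustar i = 0 := by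
    intro i hvi
    rcases mul_eq_zero.1 (hcompl i) with h | h
    · exact h
    · exact absurd h (ne_of_gt hvi)
  have hvsu : ∀ i : Fin s, pu i → vstar i = 0 := by
    intro i hui
    rcases mul_eq_zero.1 (hcompl i) with h | h
    · exact absurd h (ne_of_gt hui)
    · exact h
  -- branch 1 feasibility
  have hminpre₁ : ∀ᶠ q in 𝓝 a,
      ((∀ i ∈ I₁, 0 ≤ Phi cE cI cZ act pu pv i q) ∧
       (∀ i ∉ I₁, Phi cE cI cZ act pu pv i q = 0)) →
      (fun q : (Fin n → ℝ) × (Fin s → ℝ) × (Fin s → ℝ) => f q.1) a ≤ f q.1 := by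
    filter_upwards [hnear1, hnear2, hnear3, hnear4, hnear5, hmin'] with q hq1 hq2 hq3 hq4 hq5
      hqmin
    rintro ⟨hpos, heq0⟩
    apply hqmin
    refine ⟨hq1, hq2, ?_, ?_, ?_, ?_, ?_, ?_⟩
    · -- 0 ≤ u
      intro i
      by_cases hui : pu i
      · exact (hq4 i hui).le
      · by_cases hvi : pv i
        · exact le_of_eq (heq0 (.inr (.inr (.inr (.inl ⟨i, hui⟩)))) (not_not_intro hvi)).symm
        · exact hpos (.inr (.inr (.inr (.inl ⟨i, hui⟩)))) hvi
    · -- 0 ≤ v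
      intro i
      by_cases hvi : pv i
      · exact (hq5 i hvi).le
      · exact le_of_eq (heq0 (.inr (.inr (.inr (.inr ⟨i, hvi⟩)))) not_false).symm
    · -- complementarity
      intro i
      by_cases hvi : pv i
      · have hui : ¬ pu i := fun hui => (ne_of_gt hui) (husv i hvi)
        have := heq0 (.inr (.inr (.inr (.inl ⟨i, hui⟩)))) (not_not_intro hvi)
        rw [show Phi cE cI cZ act pu pv (.inr (.inr (.inr (.inl ⟨i, hui⟩)))) q
          = q.2.1 i from rfl] at this
        rw [this, zero_mul]
      · have := heq0 (.inr (.inr (.inr (.inr ⟨i, hvi⟩)))) not_false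
        rw [show Phi cE cI cZ act pu pv (.inr (.inr (.inr (.inr ⟨i, hvi⟩)))) q
          = q.2.2 i from rfl] at this
        rw [this, mul_zero]
    · -- cE = 0
      funext k
      exact heq0 (.inl k) not_false
    · -- cI ≥ 0
      intro j
      by_cases hj : act j
      · exact hpos (.inr (.inl ⟨j, hj⟩)) trivial
      · exact (hq3 j hj).le
    · -- cZ = u - v
      funext i
      have := heq0 (.inr (.inr (.inl i))) not_false
      rw [show Phi cE cI cZ act pu pv (.inr (.inr (.inl i))) q
        = cZ (q.1, q.2.1 + q.2.2) i - q.2.1 i + q.2.2 i from rfl] at this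
      rw [Pi.sub_apply]
      linarith
  -- branch 2 feasibility
  have hminpre₂ : ∀ᶠ q in 𝓝 a,
      ((∀ i ∈ I₂, 0 ≤ Phi cE cI cZ act pu pv i q) ∧
       (∀ i ∉ I₂, Phi cE cI cZ act pu pv i q = 0)) →
      (fun q : (Fin n → ℝ) × (Fin s → ℝ) × (Fin s → ℝ) => f q.1) a ≤ f q.1 := by
    filter_upwards [hnear1, hnear2, hnear3, hnear4, hnear5, hmin'] with q hq1 hq2 hq3 hq4 hq5
      hqmin
    rintro ⟨hpos, heq0⟩
    apply hqmin
    refine ⟨hq1, hq2, ?_, ?_, ?_, ?_, ?_, ?_⟩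
    · intro i
      by_cases hui : pu i
      · exact (hq4 i hui).le
      · exact le_of_eq (heq0 (.inr (.inr (.inr (.inl ⟨i, hui⟩)))) not_false).symm
    · intro i
      by_cases hvi : pv i
      · exact (hq5 i hvi).le
      · by_cases hui : pu i
        · exact le_of_eq (heq0 (.inr (.inr (.inr (.inr ⟨i, hvi⟩)))) (not_not_intro hui)).symm
        · exact hpos (.inr (.inr (.inr (.inr ⟨i, hvi⟩)))) hui
    · intro i
      by_cases hui : pu i
      · have hvi : ¬ pv i := fun hvi => (ne_of_gt hvi) (hvsu i hui)
        have := heq0 (.inr (.inr (.inr (.inr ⟨i, hvi⟩)))) (not_not_intro hui)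
        rw [show Phi cE cI cZ act pu pv (.inr (.inr (.inr (.inr ⟨i, hvi⟩)))) q
          = q.2.2 i from rfl] at this
        rw [this, mul_zero]
      · have := heq0 (.inr (.inr (.inr (.inl ⟨i, hui⟩)))) not_false
        rw [show Phi cE cI cZ act pu pv (.inr (.inr (.inr (.inl ⟨i, hui⟩)))) q
          = q.2.1 i from rfl] at this
        rw [this, zero_mul]
    · funext k
      exact heq0 (.inl k) not_false
    · intro j
      by_cases hj : act j
      · exact hpos (.inr (.inl ⟨j, hj⟩)) trivial
      · exact (hq3 j hj).le
    · funext i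
      have := heq0 (.inr (.inr (.inl i))) not_false
      rw [show Phi cE cI cZ act pu pv (.inr (.inr (.inl i))) q
        = cZ (q.1, q.2.1 + q.2.2) i - q.2.1 i + q.2.2 i from rfl] at this
      rw [Pi.sub_apply]
      linarith
  obtain ⟨μ₁, hμ₁I, hμ₁rep⟩ := kkt_abstract hPhiStrict hF hPhia hsurj I₁ hminpre₁
  obtain ⟨μ₂, hμ₂I, hμ₂rep⟩ := kkt_abstract hPhiStrict hF hPhia hsurj I₂ hminpre₂
  -- uniqueness of the multipliers
  have hμeq : μ₁ = μ₂ := by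
    have h0 : ∀ y, ∑ i, (μ₁ i - μ₂ i) * Phi' DE DI DZs act pu pv i y = 0 := by
      intro y
      have h1 := congrFun (congrArg DFunLike.coe hμ₁rep) y
      have h2 := congrFun (congrArg DFunLike.coe hμ₂rep) y
      simp only [ContinuousLinearMap.coe_sum', Finset.sum_apply,
        ContinuousLinearMap.coe_smul', Pi.smul_apply, smul_eq_mul] at h1 h2
      have hd : ∑ i, (μ₁ i - μ₂ i) * Phi' DE DI DZs act pu pv i y
          = (∑ i, μ₁ i * Phi' DE DI DZs act pu pv i y)
            - ∑ i, μ₂ i * Phi' DE DI DZs act pu pv i y := by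
        rw [← Finset.sum_sub_distrib]
        exact Finset.sum_congr rfl fun i _ => by ring
      rw [hd, ← h1, ← h2, sub_self]
    have hS : Function.Surjective (ContinuousLinearMap.pi (Phi' DE DI DZs act pu pv)) := by
      exact LinearMap.range_eq_top.1 hsurj
    obtain ⟨x, hx⟩ := hS (fun i => μ₁ i - μ₂ i)
    funext i
    have hxi : ∀ i, Phi' DE DI DZs act pu pv i x = μ₁ i - μ₂ i :=
      fun i => congrFun hx i
    have hsq : ∑ j, (μ₁ j - μ₂ j) * (μ₁ j - μ₂ j) = 0 := by
      calc ∑ j, (μ₁ j - μ₂ j) * (μ₁ j - μ₂ j)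
          = ∑ j, (μ₁ j - μ₂ j) * Phi' DE DI DZs act pu pv j x :=
            Finset.sum_congr rfl fun j _ => by rw [hxi j]
        _ = 0 := h0 x
    have := Finset.sum_eq_zero_iff_of_nonneg
      (fun j _ => mul_self_nonneg (μ₁ j - μ₂ j)) |>.1 hsq i (Finset.mem_univ i)
    have := mul_self_eq_zero.1 this
    linarith
  have hμ₂I' : ∀ i ∈ I₂, 0 ≤ μ₁ i := hμeq ▸ hμ₂I
  -- evaluation of the representation
  have hEval : ∀ x : (Fin n → ℝ) × (Fin s → ℝ) × (Fin s → ℝ),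
      Df x.1 = ∑ i, μ₁ i * Phi' DE DI DZs act pu pv i x := by
    intro x
    have h := congrFun (congrArg DFunLike.coe hμ₁rep) x
    simp only [ContinuousLinearMap.coe_sum', Finset.sum_apply,
      ContinuousLinearMap.coe_smul', Pi.smul_apply, smul_eq_mul,
      ContinuousLinearMap.coe_comp', Function.comp_apply,
      ContinuousLinearMap.coe_fst'] at h
    exact h
  have hsplit : ∀ (g : Idx m₁ m₂ s act pu pv → ℝ), ∑ i, g i =
      ∑ k : Fin m₁, g (.inl k) + (∑ j : {j // act j}, g (.inr (.inl j)) +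
        (∑ i : Fin s, g (.inr (.inr (.inl i))) +
          (∑ iu : {i // ¬ pu i}, g (.inr (.inr (.inr (.inl iu)))) +
            ∑ iv : {i // ¬ pv i}, g (.inr (.inr (.inr (.inr iv))))))) := by
    intro g
    rw [Fintype.sum_sum_type, Fintype.sum_sum_type, Fintype.sum_sum_type, Fintype.sum_sum_type]
  -- pointwise values of the constraint gradients at basis vectors
  have hzz : ((0 : Fin s → ℝ) + 0) = 0 := add_zero 0
  have hPE1 : ∀ (k : Fin m₁) (j0 : Fin n), Phi' DE DI DZs act pu pv (.inl k)
      ((Pi.single j0 1 : Fin n → ℝ), 0, 0) = mat1 DE k j0 := by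
    intro k j0
    show DE ((Pi.single j0 1 : Fin n → ℝ), (0 : Fin s → ℝ) + 0) k = _
    rw [hzz]; rfl
  have hPE2 : ∀ (k : Fin m₁) (i0 : Fin s), Phi' DE DI DZs act pu pv (.inl k)
      (0, (Pi.single i0 1 : Fin s → ℝ), 0) = mat2 DE k i0 := by
    intro k i0
    show DE (0, (Pi.single i0 1 : Fin s → ℝ) + 0) k = _
    rw [add_zero]; rfl
  have hPE3 : ∀ (k : Fin m₁) (i0 : Fin s), Phi' DE DI DZs act pu pv (.inl k)
      (0, 0, (Pi.single i0 1 : Fin s → ℝ)) = mat2 DE k i0 := by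
    intro k i0
    show DE (0, (0 : Fin s → ℝ) + Pi.single i0 1) k = _
    rw [zero_add]; rfl
  have hPI1 : ∀ (j : {j // act j}) (j0 : Fin n), Phi' DE DI DZs act pu pv (.inr (.inl j))
      ((Pi.single j0 1 : Fin n → ℝ), 0, 0) = mat1 DI j.val j0 := by
    intro j j0
    show DI ((Pi.single j0 1 : Fin n → ℝ), (0 : Fin s → ℝ) + 0) j.val = _
    rw [hzz]; rfl
  have hPI2 : ∀ (j : {j // act j}) (i0 : Fin s), Phi' DE DI DZs act pu pv (.inr (.inl j))
      (0, (Pi.single i0 1 : Fin s → ℝ), 0) = mat2 DI j.val i0 := by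
    intro j i0
    show DI (0, (Pi.single i0 1 : Fin s → ℝ) + 0) j.val = _
    rw [add_zero]; rfl
  have hPI3 : ∀ (j : {j // act j}) (i0 : Fin s), Phi' DE DI DZs act pu pv (.inr (.inl j))
      (0, 0, (Pi.single i0 1 : Fin s → ℝ)) = mat2 DI j.val i0 := by
    intro j i0
    show DI (0, (0 : Fin s → ℝ) + Pi.single i0 1) j.val = _
    rw [zero_add]; rfl
  have hPZ1 : ∀ (i : Fin s) (j0 : Fin n), Phi' DE DI DZs act pu pv (.inr (.inr (.inl i)))
      ((Pi.single j0 1 : Fin n → ℝ), 0, 0) = mat1 DZs i j0 := by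
    intro i j0
    show DZs ((Pi.single j0 1 : Fin n → ℝ), (0 : Fin s → ℝ) + 0) i
      - (0 : Fin s → ℝ) i + (0 : Fin s → ℝ) i = _
    rw [hzz]
    simp only [Pi.zero_apply, sub_zero, add_zero]
    rfl
  have hPZ2 : ∀ (i i0 : Fin s), Phi' DE DI DZs act pu pv (.inr (.inr (.inl i)))
      (0, (Pi.single i0 1 : Fin s → ℝ), 0)
      = mat2 DZs i i0 - (if i = i0 then (1:ℝ) else 0) := by
    intro i i0
    show DZs (0, (Pi.single i0 1 : Fin s → ℝ) + 0) i
      - (Pi.single i0 1 : Fin s → ℝ) i + (0 : Fin s → ℝ) i = _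
    rw [add_zero]
    simp only [Pi.zero_apply, add_zero, Pi.single_apply]
    rfl
  have hPZ3 : ∀ (i i0 : Fin s), Phi' DE DI DZs act pu pv (.inr (.inr (.inl i)))
      (0, 0, (Pi.single i0 1 : Fin s → ℝ))
      = mat2 DZs i i0 + (if i = i0 then (1:ℝ) else 0) := by
    intro i i0
    show DZs (0, (0 : Fin s → ℝ) + Pi.single i0 1) i
      - (0 : Fin s → ℝ) i + (Pi.single i0 1 : Fin s → ℝ) i = _
    rw [zero_add]
    simp only [Pi.zero_apply, sub_zero, Pi.single_apply]
    rfl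
  have hPU1 : ∀ (iu : {i // ¬ pu i}) (j0 : Fin n), Phi' DE DI DZs act pu pv
      (.inr (.inr (.inr (.inl iu)))) ((Pi.single j0 1 : Fin n → ℝ), 0, 0) = 0 := fun _ _ => rfl
  have hPU2 : ∀ (iu : {i // ¬ pu i}) (i0 : Fin s), Phi' DE DI DZs act pu pv
      (.inr (.inr (.inr (.inl iu)))) (0, (Pi.single i0 1 : Fin s → ℝ), 0)
      = if (iu : Fin s) = i0 then (1:ℝ) else 0 := by
    intro iu i0
    show (Pi.single i0 1 : Fin s → ℝ) iu.val = _
    rw [Pi.single_apply]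
  have hPU3 : ∀ (iu : {i // ¬ pu i}) (i0 : Fin s), Phi' DE DI DZs act pu pv
      (.inr (.inr (.inr (.inl iu)))) (0, 0, (Pi.single i0 1 : Fin s → ℝ)) = 0 := fun _ _ => rfl
  have hPV1 : ∀ (iv : {i // ¬ pv i}) (j0 : Fin n), Phi' DE DI DZs act pu pv
      (.inr (.inr (.inr (.inr iv)))) ((Pi.single j0 1 : Fin n → ℝ), 0, 0) = 0 := fun _ _ => rfl
  have hPV2 : ∀ (iv : {i // ¬ pv i}) (i0 : Fin s), Phi' DE DI DZs act pu pv
      (.inr (.inr (.inr (.inr iv)))) (0, (Pi.single i0 1 : Fin s → ℝ), 0) = 0 := fun _ _ => rfl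
  have hPV3 : ∀ (iv : {i // ¬ pv i}) (i0 : Fin s), Phi' DE DI DZs act pu pv
      (.inr (.inr (.inr (.inr iv)))) (0, 0, (Pi.single i0 1 : Fin s → ℝ))
      = if (iv : Fin s) = i0 then (1:ℝ) else 0 := by
    intro iv i0
    show (Pi.single i0 1 : Fin s → ℝ) iv.val = _
    rw [Pi.single_apply]
  -- the multipliers
  set lE : Fin m₁ → ℝ := fun k => -μ₁ (.inl k) with hlE
  set lI : Fin m₂ → ℝ := fun j => if h : act j then μ₁ (.inr (.inl ⟨j, h⟩)) else 0 with hlI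
  set lZ : Fin s → ℝ := fun i => -μ₁ (.inr (.inr (.inl i))) with hlZ
  set μu : Fin s → ℝ := fun i => if h : pu i then 0
    else μ₁ (.inr (.inr (.inr (.inl ⟨i, h⟩)))) with hμudef
  set μv : Fin s → ℝ := fun i => if h : pv i then 0
    else μ₁ (.inr (.inr (.inr (.inr ⟨i, h⟩)))) with hμvdef
  refine ⟨lE, lI, lZ, μu, μv, ?_, ?_, ?_, ?_, ?_, ?_, ?_, ?_⟩
  · -- first stationarity equation
    rw [hJE1, hJI1, hJZ1]
    funext j0
    have h := hEval ((Pi.single j0 1 : Fin n → ℝ), 0, 0)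
    rw [hsplit] at h
    simp only [hPE1, hPI1, hPZ1, hPU1, hPV1, mul_zero, Finset.sum_const_zero, add_zero] at h
    simp only [Pi.add_apply, Pi.sub_apply, Pi.zero_apply, Matrix.mulVec, dotProduct,
      Matrix.transpose_apply]
    have cE1 : ∑ k, mat1 DE k j0 * lE k = -∑ k, μ₁ (.inl k) * mat1 DE k j0 := by
      rw [← Finset.sum_neg_distrib]
      exact Finset.sum_congr rfl fun k _ => by rw [hlE]; ring
    have cI1 : ∑ j', mat1 DI j' j0 * lI j'
        = ∑ j : {j // act j}, μ₁ (.inr (.inl j)) * mat1 DI j.val j0 := by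
      rw [← sum_dite_subtype act (fun j' => mat1 DI j' j0)
        (fun j => μ₁ (.inr (.inl j)))]
      refine Finset.sum_congr rfl fun j' _ => ?_
      by_cases hj : act j' <;> simp [hlI, hj, mul_comm]
    have cZ1 : ∑ i, mat1 DZs i j0 * lZ i
        = -∑ i, μ₁ (.inr (.inr (.inl i))) * mat1 DZs i j0 := by
      rw [← Finset.sum_neg_distrib]
      exact Finset.sum_congr rfl fun i _ => by rw [hlZ]; ring
    rw [cE1, cI1, cZ1]
    linarith
  · -- second stationarity equation
    rw [hJE2, hJI2, hJZ2]
    funext i0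
    have h := hEval (0, (Pi.single i0 1 : Fin s → ℝ), 0)
    rw [hsplit] at h
    simp only [hPE2, hPI2, hPZ2, hPU2, hPV2, mul_zero, Finset.sum_const_zero, add_zero] at h
    rw [map_zero] at h
    have hUsum : ∑ iu : {i // ¬ pu i}, μ₁ (.inr (.inr (.inr (.inl iu))))
        * (if (iu : Fin s) = i0 then (1:ℝ) else 0) = μu i0 := by
      have h1 := sum_subtype_single (fun i => ¬ pu i)
        (fun iu : {i // ¬ pu i} => μ₁ (.inr (.inr (.inr (.inl iu))))) i0
      refine h1.trans ?_
      by_cases hp : pu i0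
      · rw [dif_neg (not_not_intro hp), hμudef]; simp [hp]
      · rw [dif_pos hp, hμudef]; simp [hp]
    rw [hUsum] at h
    simp only [Pi.add_apply, Pi.sub_apply, Pi.zero_apply, Matrix.mulVec, dotProduct,
      Matrix.transpose_apply, Matrix.sub_apply, Matrix.one_apply]
    have cE2 : ∑ k, mat2 DE k i0 * lE k = -∑ k, μ₁ (.inl k) * mat2 DE k i0 := by
      rw [← Finset.sum_neg_distrib]
      exact Finset.sum_congr rfl fun k _ => by rw [hlE]; ring
    have cI2 : ∑ j', mat2 DI j' i0 * lI j'
        = ∑ j : {j // act j}, μ₁ (.inr (.inl j)) * mat2 DI j.val i0 := by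
      rw [← sum_dite_subtype act (fun j' => mat2 DI j' i0)
        (fun j => μ₁ (.inr (.inl j)))]
      refine Finset.sum_congr rfl fun j' _ => ?_
      by_cases hj : act j' <;> simp [hlI, hj, mul_comm]
    have cZ2 : ∑ i, (mat2 DZs i i0 - if i = i0 then (1:ℝ) else 0) * lZ i
        = -∑ i, μ₁ (.inr (.inr (.inl i)))
          * (mat2 DZs i i0 - if i = i0 then (1:ℝ) else 0) := by
      rw [← Finset.sum_neg_distrib]
      exact Finset.sum_congr rfl fun i _ => by rw [hlZ]; ring
    rw [cE2, cI2, cZ2]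
    linarith
  · -- third stationarity equation
    rw [hJE2, hJI2, hJZ2]
    funext i0
    have h := hEval (0, 0, (Pi.single i0 1 : Fin s → ℝ))
    rw [hsplit] at h
    simp only [hPE3, hPI3, hPZ3, hPU3, hPV3, mul_zero, Finset.sum_const_zero, add_zero,
      zero_add] at h
    rw [map_zero] at h
    have hVsum : ∑ iv : {i // ¬ pv i}, μ₁ (.inr (.inr (.inr (.inr iv))))
        * (if (iv : Fin s) = i0 then (1:ℝ) else 0) = μv i0 := by
      have h1 := sum_subtype_single (fun i => ¬ pv i)
        (fun iv : {i // ¬ pv i} => μ₁ (.inr (.inr (.inr (.inr iv))))) i0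
      refine h1.trans ?_
      by_cases hp : pv i0
      · rw [dif_neg (not_not_intro hp), hμvdef]; simp [hp]
      · rw [dif_pos hp, hμvdef]; simp [hp]
    rw [hVsum] at h
    simp only [Pi.add_apply, Pi.sub_apply, Pi.zero_apply, Matrix.mulVec, dotProduct,
      Matrix.transpose_apply, Matrix.add_apply, Matrix.one_apply]
    have cE3 : ∑ k, mat2 DE k i0 * lE k = -∑ k, μ₁ (.inl k) * mat2 DE k i0 := by
      rw [← Finset.sum_neg_distrib]
      exact Finset.sum_congr rfl fun k _ => by rw [hlE]; ring
    have cI3 : ∑ j', mat2 DI j' i0 * lI j'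
        = ∑ j : {j // act j}, μ₁ (.inr (.inl j)) * mat2 DI j.val i0 := by
      rw [← sum_dite_subtype act (fun j' => mat2 DI j' i0)
        (fun j => μ₁ (.inr (.inl j)))]
      refine Finset.sum_congr rfl fun j' _ => ?_
      by_cases hj : act j' <;> simp [hlI, hj, mul_comm]
    have cZ3 : ∑ i, (mat2 DZs i i0 + if i = i0 then (1:ℝ) else 0) * lZ i
        = -∑ i, μ₁ (.inr (.inr (.inl i)))
          * (mat2 DZs i i0 + if i = i0 then (1:ℝ) else 0) := by
      rw [← Finset.sum_neg_distrib]
      exact Finset.sum_congr rfl fun i _ => by rw [hlZ]; ring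
    rw [cE3, cI3, cZ3]
    linarith
  · -- sign conditions on the biactive set
    intro i ⟨hui, hvi⟩
    have hpui : ¬ pu i := fun h => absurd hui (ne_of_gt h)
    have hpvi : ¬ pv i := fun h => absurd hvi (ne_of_gt h)
    constructor
    · rw [hμudef]
      simp only [dif_neg hpui]
      exact hμ₁I (.inr (.inr (.inr (.inl ⟨i, hpui⟩)))) hpvi
    · rw [hμvdef]
      simp only [dif_neg hpvi]
      exact hμ₂I' (.inr (.inr (.inr (.inr ⟨i, hpvi⟩)))) hpui
  · -- μu vanishes on U₊
    intro i hi
    rw [hμudef]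
    simp only [dif_pos (show pu i from hi)]
  · -- μv vanishes on V₊
    intro i hi
    rw [hμvdef]
    simp only [dif_pos (show pv i from hi)]
  · -- lI nonneg
    intro j
    rw [hlI]
    by_cases hj : act j
    · simp only [dif_pos hj]
      exact hμ₁I (.inr (.inl ⟨j, hj⟩)) trivial
    · simp only [dif_neg hj]
      exact le_rfl
  · -- complementarity of lI
    rw [dotProduct]
    apply Finset.sum_eq_zero
    intro j _
    by_cases hj : act j
    · rw [show cI (tstar, ustar + vstar) j = 0 from hj, mul_zero]
    · rw [hlI]
      simp only [dif_neg hj, zero_mul]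

end
end

section
/- Let f' ∈ ℝ^n, E₁ ∈ ℝ^{m₁×n}, E₂ ∈ ℝ^{m₁×s}, I₁ ∈ ℝ^{m₂×n}, I₂ ∈ ℝ^{m₂×s}, Z₁ ∈ ℝ^{s×n}, Z₂ ∈ ℝ^{s×s}, and c ∈ ℝ^{m₂} with c ≥ 0; let U₊, V₊, D be a partition of {1,…,s} and set A = {i : cᵢ = 0}. Suppose there are multipliers λ_E, λ_I, λ_Z, μᵘ, μᵛ satisfying the S-stationarity conditions: f' + E₁ᵀλ_E − I₁ᵀλ_I + Z₁ᵀλ_Z = 0; μᵘ = E₂ᵀλ_E − I₂ᵀλ_I + (Z₂ − I)ᵀλ_Z; μᵛ = E₂ᵀλ_E − I₂ᵀλ_I + (Z₂ + I)ᵀλ_Z; μᵘᵢ ≥ 0, μᵛᵢ ≥ 0 for i ∈ D; μᵘᵢ = 0 for i ∈ U₊; μᵛᵢ = 0 for i ∈ V₊; λ_I ≥ 0; λ_Iᵀc = 0; and suppose strict complementarity holds: (λ_I)ᵢ > 0 for all i ∈ A, and μᵘᵢ > 0 and μᵛᵢ > 0 for all i ∈ D. Then a vector d = (d_t, d_u,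 d_v) ∈ ℝ^n × ℝ^s × ℝ^s is a critical direction, i.e. satisfies min(d_{u,i}, d_{v,i}) = 0 for i ∈ D; d_{u,i} = 0 for i ∈ V₊; d_{v,i} = 0 for i ∈ U₊; P_A(I₁d_t + I₂(d_u + d_v)) ≥ 0; E₁d_t + E₂(d_u + d_v) = 0; Z₁d_t + (Z₂ − I)d_u + (Z₂ + I)d_v = 0; f'ᵀd_t = 0, if and only if d lies in the kernel of the tightened Jacobian, i.e. E₁d_t + E₂(d_u + d_v) = 0; P_A(I₁d_t + I₂(d_u + d_v)) = 0; Z₁d_t + (Z₂ − I)d_u + (Z₂ + I)d_v = 0; d_{u,i} = 0 for all i ∈ V₊ ∪ D; and d_{v,i} = 0 for all i ∈ U₊ ∪ D. -/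
open Matrix

/-- Under S-stationarity with strict complementarity, the set of critical directions
coincides with the kernel of the tightened Jacobian. -/
theorem stmt12 {n s m₁ m₂ : ℕ}
    (f' : Fin n → ℝ)
    (E₁ : Matrix (Fin m₁) (Fin n) ℝ) (E₂ : Matrix (Fin m₁) (Fin s) ℝ)
    (I₁ : Matrix (Fin m₂) (Fin n) ℝ) (I₂ : Matrix (Fin m₂) (Fin s) ℝ)
    (Z₁ : Matrix (Fin s) (Fin n) ℝ) (Z₂ : Matrix (Fin s) (Fin s) ℝ)
    (c : Fin m₂ → ℝ) (hc : ∀ j, 0 ≤ c j)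
    (U V D : Set (Fin s))
    (hpart : ∀ i, (i ∈ U ∧ i ∉ V ∧ i ∉ D) ∨ (i ∉ U ∧ i ∈ V ∧ i ∉ D) ∨
      (i ∉ U ∧ i ∉ V ∧ i ∈ D))
    (lE : Fin m₁ → ℝ) (lI : Fin m₂ → ℝ) (lZ : Fin s → ℝ) (μu μv : Fin s → ℝ)
    -- S-stationarity
    (hstat : f' + E₁ᵀ *ᵥ lE - I₁ᵀ *ᵥ lI + Z₁ᵀ *ᵥ lZ = 0)
    (hμu : μu = E₂ᵀ *ᵥ lE - I₂ᵀ *ᵥ lI + (Z₂ - 1)ᵀ *ᵥ lZ)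
    (hμv : μv = E₂ᵀ *ᵥ lE - I₂ᵀ *ᵥ lI + (Z₂ + 1)ᵀ *ᵥ lZ)
    (hμD : ∀ i ∈ D, 0 ≤ μu i ∧ 0 ≤ μv i)
    (hμU : ∀ i ∈ U, μu i = 0)
    (hμV : ∀ i ∈ V, μv i = 0)
    (hlI : ∀ j, 0 ≤ lI j)
    (hlIc : lI ⬝ᵥ c = 0)
    -- strict complementarity
    (hsc1 : ∀ j, c j = 0 → 0 < lI j)
    (hsc2 : ∀ i ∈ D, 0 < μu i ∧ 0 < μv i)
    (dt : Fin n → ℝ) (du dv : Fin s → ℝ) :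
    -- critical direction
    ((∀ i ∈ D, min (du i) (dv i) = 0) ∧
      (∀ i ∈ V, du i = 0) ∧
      (∀ i ∈ U, dv i = 0) ∧
      (∀ j, c j = 0 → 0 ≤ (I₁ *ᵥ dt + I₂ *ᵥ (du + dv)) j) ∧
      E₁ *ᵥ dt + E₂ *ᵥ (du + dv) = 0 ∧
      Z₁ *ᵥ dt + (Z₂ - 1) *ᵥ du + (Z₂ + 1) *ᵥ dv = 0 ∧
      f' ⬝ᵥ dt = 0)
    ↔
    -- kernel of the tightened Jacobian
    (E₁ *ᵥ dt + E₂ *ᵥ (du + dv) = 0 ∧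
      (∀ j, c j = 0 → (I₁ *ᵥ dt + I₂ *ᵥ (du + dv)) j = 0) ∧
      Z₁ *ᵥ dt + (Z₂ - 1) *ᵥ du + (Z₂ + 1) *ᵥ dv = 0 ∧
      (∀ i, i ∈ V ∨ i ∈ D → du i = 0) ∧
      (∀ i, i ∈ U ∨ i ∈ D → dv i = 0)) := by
  classical
  set q : Fin m₂ → ℝ := I₁ *ᵥ dt + I₂ *ᵥ (du + dv) with hq
  -- termwise complementarity of lI and c
  have hlI0 : ∀ j, c j ≠ 0 → lI j = 0 := by
    intro j hj
    have hterm : ∀ k ∈ Finset.univ, (0:ℝ) ≤ lI k * c k :=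
      fun k _ => mul_nonneg (hlI k) (hc k)
    have hsum : ∑ k, lI k * c k = 0 := hlIc
    have h0 : lI j * c j = 0 :=
      (Finset.sum_eq_zero_iff_of_nonneg hterm).mp hsum j (Finset.mem_univ j)
    rcases mul_eq_zero.mp h0 with h | h
    · exact h
    · exact absurd h hj
  -- the key identity
  have key : ∀ (_ : E₁ *ᵥ dt + E₂ *ᵥ (du + dv) = 0)
      (_ : Z₁ *ᵥ dt + (Z₂ - 1) *ᵥ du + (Z₂ + 1) *ᵥ dv = 0),
      f' ⬝ᵥ dt = lI ⬝ᵥ q + μu ⬝ᵥ du + μv ⬝ᵥ dv := by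
    intro hE hZ
    have hE' := congrArg (fun z => lE ⬝ᵥ z) hE
    have hZ' := congrArg (fun z => lZ ⬝ᵥ z) hZ
    have hst' := congrArg (fun z => z ⬝ᵥ dt) hstat
    simp only [hq, hμu, hμv, mulVec_add, dotProduct_add, add_dotProduct,
      sub_dotProduct, dotProduct_sub, dotProduct_zero, zero_dotProduct,
      mulVec_transpose, ← dotProduct_mulVec] at hE' hZ' hst' ⊢
    linarith
  constructor
  · rintro ⟨hmin, hV, hU, hA, hE, hZ, hf⟩
    have hkey := key hE hZ
    rw [hf] at hkey
    have h1 : ∀ j, (0:ℝ) ≤ lI j * q j := by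
      intro j
      by_cases hcj : c j = 0
      · exact mul_nonneg (hlI j) (hA j hcj)
      · rw [hlI0 j hcj, zero_mul]
    have h2 : ∀ i, (0:ℝ) ≤ μu i * du i := by
      intro i
      rcases hpart i with ⟨h, _, _⟩ | ⟨_, h, _⟩ | ⟨_, _, h⟩
      · rw [hμU i h, zero_mul]
      · rw [hV i h, mul_zero]
      · have hdu : 0 ≤ du i := (hmin i h) ▸ min_le_left (du i) (dv i)
        exact mul_nonneg (hμD i h).1 hdu
    have h3 : ∀ i, (0:ℝ) ≤ μv i * dv i := by
      intro i
      rcases hpart i with ⟨h, _, _⟩ | ⟨_, h, _⟩ | ⟨_, _, h⟩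
      · rw [hU i h, mul_zero]
      · rw [hμV i h, zero_mul]
      · have hdv : 0 ≤ dv i := (hmin i h) ▸ min_le_right (du i) (dv i)
        exact mul_nonneg (hμD i h).2 hdv
    have s1 : (0:ℝ) ≤ lI ⬝ᵥ q := Finset.sum_nonneg fun j _ => h1 j
    have s2 : (0:ℝ) ≤ μu ⬝ᵥ du := Finset.sum_nonneg fun i _ => h2 i
    have s3 : (0:ℝ) ≤ μv ⬝ᵥ dv := Finset.sum_nonneg fun i _ => h3 i
    have e1 : lI ⬝ᵥ q = 0 := by linarith
    have e2 : μu ⬝ᵥ du = 0 := by linarith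
    have e3 : μv ⬝ᵥ dv = 0 := by linarith
    have t1 : ∀ j, lI j * q j = 0 := fun j =>
      (Finset.sum_eq_zero_iff_of_nonneg (fun k _ => h1 k)).mp e1 j (Finset.mem_univ j)
    have t2 : ∀ i, μu i * du i = 0 := fun i =>
      (Finset.sum_eq_zero_iff_of_nonneg (fun k _ => h2 k)).mp e2 i (Finset.mem_univ i)
    have t3 : ∀ i, μv i * dv i = 0 := fun i =>
      (Finset.sum_eq_zero_iff_of_nonneg (fun k _ => h3 k)).mp e3 i (Finset.mem_univ i)
    refine ⟨hE, ?_, hZ, ?_, ?_⟩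
    · intro j hj
      exact (mul_eq_zero.mp (t1 j)).resolve_left (ne_of_gt (hsc1 j hj))
    · intro i hi
      rcases hi with hi | hi
      · exact hV i hi
      · exact (mul_eq_zero.mp (t2 i)).resolve_left (ne_of_gt (hsc2 i hi).1)
    · intro i hi
      rcases hi with hi | hi
      · exact hU i hi
      · exact (mul_eq_zero.mp (t3 i)).resolve_left (ne_of_gt (hsc2 i hi).2)
  · rintro ⟨hE, hA, hZ, hdu, hdv⟩
    have hkey := key hE hZ
    have e1 : lI ⬝ᵥ q = 0 := by
      apply Finset.sum_eq_zero
      intro j _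
      by_cases hj : c j = 0
      · rw [hA j hj, mul_zero]
      · rw [hlI0 j hj, zero_mul]
    have e2 : μu ⬝ᵥ du = 0 := by
      apply Finset.sum_eq_zero
      intro i _
      rcases hpart i with ⟨h, _, _⟩ | ⟨_, h, _⟩ | ⟨_, _, h⟩
      · rw [hμU i h, zero_mul]
      · rw [hdu i (Or.inl h), mul_zero]
      · rw [hdu i (Or.inr h), mul_zero]
    have e3 : μv ⬝ᵥ dv = 0 := by
      apply Finset.sum_eq_zero
      intro i _
      rcases hpart i with ⟨h, _, _⟩ | ⟨_, h, _⟩ | ⟨_, _, h⟩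
      · rw [hdv i (Or.inl h), mul_zero]
      · rw [hμV i h, zero_mul]
      · rw [hdv i (Or.inr h), mul_zero]
    exact ⟨fun i hi => by rw [hdu i (Or.inr hi), hdv i (Or.inr hi)]; simp,
      fun i hi => hdu i (Or.inl hi), fun i hi => hdv i (Or.inl hi),
      fun j hj => le_of_eq (hA j hj).symm, hE, hZ,
      by rw [hkey, e1, e2, e3]; ring⟩
end

section
/- Let D^t ⊆ ℝ^n be open and D^z ⊆ ℝ^s be open and symmetric under componentwise sign changes. Let f : D^t → ℝ and cE : D^t × D^z → ℝ^{m₁}, cI : D^t × D^z → ℝ^{m₂}, cZ : D^t × D^z → ℝ^s be twice continuously differentiable. Let y* = (t*, u*, v*) be feasible for the counterpart MPCC (t* ∈ D^t, u*+v* ∈ D^z, u*, v* ≥ 0, u*ᵢv*ᵢ = 0, cE(t*,u*+v*) = 0, cI(t*,u*+v*) ≥ 0, cZ(t*,u*+v*) = u*−v*) and a local minimizer of (t,u,v) ↦ f(t) over the MPCC feasible set F_mpcc = {(t,u,v) : t ∈ D^t, u+v ∈ D^z, u,v ≥ 0, uᵢvᵢ = 0 ∀i, cE(t,u+v) = 0,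 cI(t,u+v) ≥ 0, cZ(t,u+v) = u−v}. Set U₊ = {i : u*ᵢ > 0}, V₊ = {i : v*ᵢ > 0}, D = {i : u*ᵢ = v*ᵢ = 0}, A = {i : cIᵢ(t*,u*+v*) = 0}. Assume MPCC-LICQ holds at y* (full row rank of [[∂₁cE*, ∂₂cE*P_{U₊}ᵀ, ∂₂cE*P_{V₊}ᵀ], [P_A∂₁cI*, P_A∂₂cI*P_{U₊}ᵀ, P_A∂₂cI*P_{V₊}ᵀ], [∂₁cZ*, (∂₂cZ*−I)P_{U₊}ᵀ, (∂₂cZ*+I)P_{V₊}ᵀ]], derivatives evaluated at (t*,u*+v*)), let (λ_E, λ_I, λ_Z, μᵘ, μᵛ) be multipliers satisfying the S-stationarity conditions at y*, and assume MPCC-strict complementarity: (λ_I)ᵢ > 0 for i ∈ A and μᵘᵢ > 0, μᵛᵢ > 0 for i ∈ D. Define Lc(t,u,v) = f(t) + λ_Eᵀ cE(t,u+v) − λ_Iᵀ cI(t,u+v) + λ_Zᵀ(cZ(t,u+v) − (u−v)). Then for every d = (d_t,d_u,d_v) satisfying ∂₁cE* d_t + ∂₂cE*(d_u+d_v) = 0,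 P_A(∂₁cI* d_t + ∂₂cI*(d_u+d_v)) = 0, ∂₁cZ* d_t + (∂₂cZ*−I)d_u + (∂₂cZ*+I)d_v = 0, d_{u,i} = 0 for i ∈ V₊ ∪ D, and d_{v,i} = 0 for i ∈ U₊ ∪ D, the Hessian quadratic form satisfies dᵀ ∇²Lc(y*) d ≥ 0, where ∇²Lc(y*) is the second derivative of Lc with respect to (t,u,v) at y*. -/
open Matrix
open Filter
open scoped Classical Topology

noncomputable section

/-- The MPCC-Lagrangian `Lc(t,u,v) = f(t) + λ_Eᵀ cE − λ_Iᵀ cI + λ_Zᵀ(cZ − (u − v))`. -/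
def Lc {n s m₁ m₂ : ℕ} (f : (Fin n → ℝ) → ℝ)
    (cE : (Fin n → ℝ) × (Fin s → ℝ) → Fin m₁ → ℝ)
    (cI : (Fin n → ℝ) × (Fin s → ℝ) → Fin m₂ → ℝ)
    (cZ : (Fin n → ℝ) × (Fin s → ℝ) → Fin s → ℝ)
    (lE : Fin m₁ → ℝ) (lI : Fin m₂ → ℝ) (lZ : Fin s → ℝ) :
    (Fin n → ℝ) × (Fin s → ℝ) × (Fin s → ℝ) → ℝ := fun y =>
  f y.1 + lE ⬝ᵥ cE (y.1, y.2.1 + y.2.2) - lI ⬝ᵥ cI (y.1, y.2.1 + y.2.2) +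
    lZ ⬝ᵥ (cZ (y.1, y.2.1 + y.2.2) - (y.2.1 - y.2.2))

def dotL {m : ℕ} (l : Fin m → ℝ) : (Fin m → ℝ) →L[ℝ] ℝ :=
  ∑ i, l i • ContinuousLinearMap.proj i

@[simp] lemma dotL_apply {m : ℕ} (l v : Fin m → ℝ) : dotL l v = l ⬝ᵥ v := by
  simp [dotL, dotProduct, ContinuousLinearMap.sum_apply]

/-- `(t,u,v) ↦ (t, u+v)` as a CLM -/
def phiL (n s : ℕ) : ((Fin n → ℝ) × (Fin s → ℝ) × (Fin s → ℝ)) →L[ℝ]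
    ((Fin n → ℝ) × (Fin s → ℝ)) :=
  (ContinuousLinearMap.fst ℝ _ _).prod
    ((ContinuousLinearMap.fst ℝ _ _).comp (ContinuousLinearMap.snd ℝ _ _) +
     (ContinuousLinearMap.snd ℝ _ _).comp (ContinuousLinearMap.snd ℝ _ _))

@[simp] lemma phiL_apply {n s : ℕ} (y : (Fin n → ℝ) × (Fin s → ℝ) × (Fin s → ℝ)) :
    phiL n s y = (y.1, y.2.1 + y.2.2) := rfl

/-- `(t,u,v) ↦ u - v` as a CLM -/
def psiL (n s : ℕ) : ((Fin n → ℝ) × (Fin s → ℝ) × (Fin s → ℝ)) →L[ℝ] (Fin s → ℝ) :=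
  (ContinuousLinearMap.fst ℝ _ _).comp (ContinuousLinearMap.snd ℝ _ _) -
  (ContinuousLinearMap.snd ℝ _ _).comp (ContinuousLinearMap.snd ℝ _ _)

@[simp] lemma psiL_apply {n s : ℕ} (y : (Fin n → ℝ) × (Fin s → ℝ) × (Fin s → ℝ)) :
    psiL n s y = y.2.1 - y.2.2 := rfl

/-- restriction to a subtype as a CLM -/
def cpi {k : ℕ} (Q : Fin k → Prop) [Fintype {j // Q j}] : ((Fin k → ℝ)) →L[ℝ] ({j // Q j} → ℝ) :=
  ContinuousLinearMap.pi (fun j => ContinuousLinearMap.proj j.1)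

@[simp] lemma cpi_apply {k : ℕ} (Q : Fin k → Prop) [Fintype {j // Q j}] (v : Fin k → ℝ) (j : {j // Q j}) :
    cpi Q v j = v j.1 := rfl

/-- candidate derivative of `Lc` at `y` -/
def DL {n s m₁ m₂ : ℕ} (f : (Fin n → ℝ) → ℝ)
    (cE : (Fin n → ℝ) × (Fin s → ℝ) → Fin m₁ → ℝ)
    (cI : (Fin n → ℝ) × (Fin s → ℝ) → Fin m₂ → ℝ)
    (cZ : (Fin n → ℝ) × (Fin s → ℝ) → Fin s → ℝ)
    (lE : Fin m₁ → ℝ) (lI : Fin m₂ → ℝ) (lZ : Fin s → ℝ)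
    (y : (Fin n → ℝ) × (Fin s → ℝ) × (Fin s → ℝ)) :
    ((Fin n → ℝ) × (Fin s → ℝ) × (Fin s → ℝ)) →L[ℝ] ℝ :=
  (fderiv ℝ f y.1).comp (ContinuousLinearMap.fst ℝ _ _) +
  (dotL lE).comp ((fderiv ℝ cE (phiL n s y)).comp (phiL n s)) -
  (dotL lI).comp ((fderiv ℝ cI (phiL n s y)).comp (phiL n s)) +
  (dotL lZ).comp (((fderiv ℝ cZ (phiL n s y)).comp (phiL n s)) - psiL n s)

/-- the constraint map for the curve construction -/
def Gmap {n s m₁ m₂ : ℕ}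
    (cE : (Fin n → ℝ) × (Fin s → ℝ) → Fin m₁ → ℝ)
    (cI : (Fin n → ℝ) × (Fin s → ℝ) → Fin m₂ → ℝ)
    (cZ : (Fin n → ℝ) × (Fin s → ℝ) → Fin s → ℝ)
    (QA : Fin m₂ → Prop) (QU QV : Fin s → Prop)
    [Fintype {j // QA j}] [Fintype {i // QU i}] [Fintype {i // QV i}]
    (y : (Fin n → ℝ) × (Fin s → ℝ) × (Fin s → ℝ)) :
    (Fin m₁ → ℝ) × ({j // QA j} → ℝ) × (Fin s → ℝ) × ({i // QU i} → ℝ) × ({i // QV i} → ℝ) :=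
  (cE (phiL n s y), cpi QA (cI (phiL n s y)), cZ (phiL n s y) - psiL n s y,
    cpi QU y.2.1, cpi QV y.2.2)

/-- its derivative at a point with base pair `p` -/
def DGmap {n s m₁ m₂ : ℕ}
    (cE : (Fin n → ℝ) × (Fin s → ℝ) → Fin m₁ → ℝ)
    (cI : (Fin n → ℝ) × (Fin s → ℝ) → Fin m₂ → ℝ)
    (cZ : (Fin n → ℝ) × (Fin s → ℝ) → Fin s → ℝ)
    (QA : Fin m₂ → Prop) (QU QV : Fin s → Prop)
    [Fintype {j // QA j}] [Fintype {i // QU i}] [Fintype {i // QV i}]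
    (p : (Fin n → ℝ) × (Fin s → ℝ)) :
    ((Fin n → ℝ) × (Fin s → ℝ) × (Fin s → ℝ)) →L[ℝ]
    ((Fin m₁ → ℝ) × ({j // QA j} → ℝ) × (Fin s → ℝ) × ({i // QU i} → ℝ) × ({i // QV i} → ℝ)) :=
  ((fderiv ℝ cE p).comp (phiL n s)).prod <|
  ((cpi QA).comp ((fderiv ℝ cI p).comp (phiL n s))).prod <|
  (((fderiv ℝ cZ p).comp (phiL n s)) - psiL n s).prod <|
  ((cpi QU).comp ((ContinuousLinearMap.fst ℝ _ _).comp (ContinuousLinearMap.snd ℝ _ _))).prod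
  ((cpi QV).comp ((ContinuousLinearMap.snd ℝ _ _).comp (ContinuousLinearMap.snd ℝ _ _)))


lemma selT_mulVec {k : ℕ} (p : Fin k → Prop) [Fintype {i // p i}] (x : {i // p i} → ℝ) :
    (sel p)ᵀ *ᵥ x = fun j => if h : p j then x ⟨j, h⟩ else 0 := by
  funext j
  simp only [Matrix.mulVec, dotProduct, Matrix.transpose_apply, sel, Matrix.of_apply]
  by_cases h : p j
  · rw [dif_pos h, Finset.sum_eq_single (⟨j, h⟩ : {i // p i})]
    · simp
    · intro b _ hb
      rw [if_neg, zero_mul]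
      intro hbj; exact hb (Subtype.ext hbj)
    · simp
  · rw [dif_neg h]
    apply Finset.sum_eq_zero
    intro b _
    rw [if_neg, zero_mul]
    intro hbj; exact h (hbj ▸ b.2)

lemma sel_mul_mulVec {k : ℕ} {C : Type*} [Fintype C] (p : Fin k → Prop) (B : Matrix (Fin k) C ℝ)
    (x : C → ℝ) : (sel p * B) *ᵥ x = fun j => (B *ᵥ x) j.1 := by
  funext j
  rw [← Matrix.mulVec_mulVec]
  simp only [Matrix.mulVec, dotProduct, sel, Matrix.of_apply]
  rw [Finset.sum_eq_single j.1]
  · simp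
  · intro b _ hb; rw [if_neg (fun h => hb h.symm), zero_mul]
  · simp

/-- full row rank implies surjectivity of mulVecLin -/
lemma surj_of_rank_rows {R C : Type*} [Fintype R] [Fintype C] (M : Matrix R C ℝ)
    (h : M.rank = Fintype.card R) : Function.Surjective M.mulVecLin := by
  rw [← LinearMap.range_eq_top]
  apply Submodule.eq_top_of_finrank_eq
  rw [← Matrix.rank, h]
  simp [Module.finrank_pi]


lemma pair_eq_sum {n s : ℕ} (wt : Fin n → ℝ) (wz : Fin s → ℝ) :
    ((wt, wz) : (Fin n → ℝ) × (Fin s → ℝ)) =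
      (∑ j, wt j • ((Pi.single j 1 : Fin n → ℝ), (0 : Fin s → ℝ))) +
      (∑ j, wz j • ((0 : Fin n → ℝ), (Pi.single j 1 : Fin s → ℝ))) := by
  rw [Prod.ext_iff]
  constructor
  · simp only [Prod.fst_sum, Prod.fst_add, Prod.smul_fst, Prod.snd_sum]
    funext i
    simp [Finset.sum_apply, Pi.single_apply]
  · simp only [Prod.snd_sum, Prod.snd_add, Prod.smul_snd]
    funext i
    simp [Finset.sum_apply, Pi.single_apply]

lemma fderiv_pair_apply {n s m : ℕ} (c : (Fin n → ℝ) × (Fin s → ℝ) → Fin m → ℝ)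
    (p : (Fin n → ℝ) × (Fin s → ℝ))
    (wt : Fin n → ℝ) (wz : Fin s → ℝ) :
    fderiv ℝ c p (wt, wz) = jac1 c p *ᵥ wt + jac2 c p *ᵥ wz := by
  funext i
  rw [pair_eq_sum wt wz, map_add, map_sum, map_sum]
  simp only [_root_.map_smul]
  simp only [Pi.add_apply, Finset.sum_apply, Pi.smul_apply, smul_eq_mul]
  congr 1
  · simp [Matrix.mulVec, dotProduct, jac1, mul_comm]
  · simp [Matrix.mulVec, dotProduct, jac2, mul_comm]

lemma fderiv_pi_apply {n : ℕ} (f : (Fin n → ℝ) → ℝ) (t : Fin n → ℝ)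
    (w : Fin n → ℝ) :
    fderiv ℝ f t w = (fun j => fderiv ℝ f t (Pi.single j 1)) ⬝ᵥ w := by
  have hw : w = ∑ j, w j • (Pi.single j 1 : Fin n → ℝ) := by
    funext i; simp [Finset.sum_apply, Pi.single_apply]
  conv_lhs => rw [hw]
  rw [map_sum]
  simp [dotProduct, mul_comm]

lemma hasFDerivAt_Lc {n s m₁ m₂ : ℕ} {f : (Fin n → ℝ) → ℝ}
    {cE : (Fin n → ℝ) × (Fin s → ℝ) → Fin m₁ → ℝ}
    {cI : (Fin n → ℝ) × (Fin s → ℝ) → Fin m₂ → ℝ}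
    {cZ : (Fin n → ℝ) × (Fin s → ℝ) → Fin s → ℝ}
    (lE : Fin m₁ → ℝ) (lI : Fin m₂ → ℝ) (lZ : Fin s → ℝ)
    {y : (Fin n → ℝ) × (Fin s → ℝ) × (Fin s → ℝ)}
    (hfd : DifferentiableAt ℝ f y.1)
    (hE : DifferentiableAt ℝ cE (phiL n s y))
    (hI : DifferentiableAt ℝ cI (phiL n s y))
    (hZ : DifferentiableAt ℝ cZ (phiL n s y)) :
    HasFDerivAt (Lc f cE cI cZ lE lI lZ) (DL f cE cI cZ lE lI lZ y) y := by
  have h0 : HasFDerivAt (fun x : (Fin n → ℝ) × (Fin s → ℝ) × (Fin s → ℝ) => f x.1)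
      ((fderiv ℝ f y.1).comp (ContinuousLinearMap.fst ℝ _ _)) y :=
    hfd.hasFDerivAt.comp y hasFDerivAt_fst
  have hE' : HasFDerivAt (fun x => dotL lE (cE (phiL n s x)))
      ((dotL lE).comp ((fderiv ℝ cE (phiL n s y)).comp (phiL n s))) y :=
    (dotL lE).hasFDerivAt.comp y (hE.hasFDerivAt.comp y (phiL n s).hasFDerivAt)
  have hI' : HasFDerivAt (fun x => dotL lI (cI (phiL n s x)))
      ((dotL lI).comp ((fderiv ℝ cI (phiL n s y)).comp (phiL n s))) y :=
    (dotL lI).hasFDerivAt.comp y (hI.hasFDerivAt.comp y (phiL n s).hasFDerivAt)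
  have hZ0 : HasFDerivAt (fun x => cZ (phiL n s x) - psiL n s x)
      (((fderiv ℝ cZ (phiL n s y)).comp (phiL n s)) - psiL n s) y :=
    (hZ.hasFDerivAt.comp y (phiL n s).hasFDerivAt).sub (psiL n s).hasFDerivAt
  have hZ' : HasFDerivAt (fun x => dotL lZ (cZ (phiL n s x) - psiL n s x))
      ((dotL lZ).comp (((fderiv ℝ cZ (phiL n s y)).comp (phiL n s)) - psiL n s)) y :=
    (dotL lZ).hasFDerivAt.comp y hZ0
  have hall := ((h0.add hE').sub hI').add hZ'
  have heq : Lc f cE cI cZ lE lI lZ = fun x =>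
      f x.1 + dotL lE (cE (phiL n s x)) - dotL lI (cI (phiL n s x)) +
        dotL lZ (cZ (phiL n s x) - psiL n s x) := by
    funext x; simp [Lc]
  rw [heq]
  exact hall

lemma DL_apply {n s m₁ m₂ : ℕ} (f : (Fin n → ℝ) → ℝ)
    (cE : (Fin n → ℝ) × (Fin s → ℝ) → Fin m₁ → ℝ)
    (cI : (Fin n → ℝ) × (Fin s → ℝ) → Fin m₂ → ℝ)
    (cZ : (Fin n → ℝ) × (Fin s → ℝ) → Fin s → ℝ)
    (lE : Fin m₁ → ℝ) (lI : Fin m₂ → ℝ) (lZ : Fin s → ℝ)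
    (y w : (Fin n → ℝ) × (Fin s → ℝ) × (Fin s → ℝ)) :
    DL f cE cI cZ lE lI lZ y w =
      fderiv ℝ f y.1 w.1 +
      lE ⬝ᵥ (jac1 cE (phiL n s y) *ᵥ w.1 + jac2 cE (phiL n s y) *ᵥ (w.2.1 + w.2.2)) -
      lI ⬝ᵥ (jac1 cI (phiL n s y) *ᵥ w.1 + jac2 cI (phiL n s y) *ᵥ (w.2.1 + w.2.2)) +
      lZ ⬝ᵥ ((jac1 cZ (phiL n s y) *ᵥ w.1 + jac2 cZ (phiL n s y) *ᵥ (w.2.1 + w.2.2)) -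
        (w.2.1 - w.2.2)) := by
  simp only [DL, ContinuousLinearMap.add_apply, ContinuousLinearMap.sub_apply,
    ContinuousLinearMap.comp_apply, phiL_apply, psiL_apply, dotL_apply,
    fderiv_pair_apply]
  rfl

lemma hasFDerivAt_Gmap {n s m₁ m₂ : ℕ}
    {cE : (Fin n → ℝ) × (Fin s → ℝ) → Fin m₁ → ℝ}
    {cI : (Fin n → ℝ) × (Fin s → ℝ) → Fin m₂ → ℝ}
    {cZ : (Fin n → ℝ) × (Fin s → ℝ) → Fin s → ℝ}
    (QA : Fin m₂ → Prop) (QU QV : Fin s → Prop)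
    [Fintype {j // QA j}] [Fintype {i // QU i}] [Fintype {i // QV i}]
    {y : (Fin n → ℝ) × (Fin s → ℝ) × (Fin s → ℝ)}
    (hE : DifferentiableAt ℝ cE (phiL n s y))
    (hI : DifferentiableAt ℝ cI (phiL n s y))
    (hZ : DifferentiableAt ℝ cZ (phiL n s y)) :
    HasFDerivAt (Gmap cE cI cZ QA QU QV) (DGmap cE cI cZ QA QU QV (phiL n s y)) y := by
  apply HasFDerivAt.prodMk
  · exact hE.hasFDerivAt.comp y (phiL n s).hasFDerivAt
  apply HasFDerivAt.prodMk
  · exact (cpi QA).hasFDerivAt.comp y (hI.hasFDerivAt.comp y (phiL n s).hasFDerivAt)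
  apply HasFDerivAt.prodMk
  · exact (hZ.hasFDerivAt.comp y (phiL n s).hasFDerivAt).sub (psiL n s).hasFDerivAt
  apply HasFDerivAt.prodMk
  · exact (cpi QU).hasFDerivAt.comp y (hasFDerivAt_fst.comp y hasFDerivAt_snd)
  · exact (cpi QV).hasFDerivAt.comp y (hasFDerivAt_snd.comp y hasFDerivAt_snd)

lemma contDiffAt_Gmap {n s m₁ m₂ : ℕ}
    {cE : (Fin n → ℝ) × (Fin s → ℝ) → Fin m₁ → ℝ}
    {cI : (Fin n → ℝ) × (Fin s → ℝ) → Fin m₂ → ℝ}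
    {cZ : (Fin n → ℝ) × (Fin s → ℝ) → Fin s → ℝ}
    (QA : Fin m₂ → Prop) (QU QV : Fin s → Prop)
    [Fintype {j // QA j}] [Fintype {i // QU i}] [Fintype {i // QV i}]
    {y : (Fin n → ℝ) × (Fin s → ℝ) × (Fin s → ℝ)}
    (hE : ContDiffAt ℝ 2 cE (phiL n s y))
    (hI : ContDiffAt ℝ 2 cI (phiL n s y))
    (hZ : ContDiffAt ℝ 2 cZ (phiL n s y)) :
    ContDiffAt ℝ 2 (Gmap cE cI cZ QA QU QV) y := by
  apply ContDiffAt.prodMk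
  · exact hE.comp y (phiL n s).contDiff.contDiffAt
  apply ContDiffAt.prodMk
  · exact ((cpi QA).contDiff.contDiffAt).comp y (hI.comp y (phiL n s).contDiff.contDiffAt)
  apply ContDiffAt.prodMk
  · exact (hZ.comp y (phiL n s).contDiff.contDiffAt).sub (psiL n s).contDiff.contDiffAt
  apply ContDiffAt.prodMk
  · exact ((cpi QU).contDiff.comp (contDiff_fst.comp contDiff_snd)).contDiffAt
  · exact ((cpi QV).contDiff.comp (contDiff_snd.comp contDiff_snd)).contDiffAt


lemma DGmap_apply {n s m₁ m₂ : ℕ}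
    (cE : (Fin n → ℝ) × (Fin s → ℝ) → Fin m₁ → ℝ)
    (cI : (Fin n → ℝ) × (Fin s → ℝ) → Fin m₂ → ℝ)
    (cZ : (Fin n → ℝ) × (Fin s → ℝ) → Fin s → ℝ)
    (QA : Fin m₂ → Prop) (QU QV : Fin s → Prop)
    [Fintype {j // QA j}] [Fintype {i // QU i}] [Fintype {i // QV i}]
    (p : (Fin n → ℝ) × (Fin s → ℝ))
    (w : (Fin n → ℝ) × (Fin s → ℝ) × (Fin s → ℝ)) :
    DGmap cE cI cZ QA QU QV p w =
      (jac1 cE p *ᵥ w.1 + jac2 cE p *ᵥ (w.2.1 + w.2.2),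
       fun j => (jac1 cI p *ᵥ w.1 + jac2 cI p *ᵥ (w.2.1 + w.2.2)) j.1,
       (jac1 cZ p *ᵥ w.1 + jac2 cZ p *ᵥ (w.2.1 + w.2.2)) - (w.2.1 - w.2.2),
       fun i => w.2.1 i.1, fun i => w.2.2 i.1) := by
  simp only [DGmap, ContinuousLinearMap.prod_apply, ContinuousLinearMap.comp_apply,
    ContinuousLinearMap.sub_apply, phiL_apply, psiL_apply, fderiv_pair_apply]
  rfl

section Surj

variable {n s m₁ m₂ : ℕ}
    (cE : (Fin n → ℝ) × (Fin s → ℝ) → Fin m₁ → ℝ)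
    (cI : (Fin n → ℝ) × (Fin s → ℝ) → Fin m₂ → ℝ)
    (cZ : (Fin n → ℝ) × (Fin s → ℝ) → Fin s → ℝ)
    (pt : (Fin n → ℝ) × (Fin s → ℝ))
    (PA : Fin m₂ → Prop) (PU PV : Fin s → Prop)
    [Fintype {j // PA j}] [Fintype {i // PU i}] [Fintype {i // PV i}]
    [Fintype {i // ¬ PU i}] [Fintype {i // ¬ PV i}]

lemma DG_surj
    (hrank : (Matrix.fromRows
        (Matrix.fromCols (jac1 cE pt)
          (Matrix.fromCols
            (jac2 cE pt * (sel PU)ᵀ)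
            (jac2 cE pt * (sel PV)ᵀ)))
        (Matrix.fromRows
          (Matrix.fromCols
            (sel PA * jac1 cI pt)
            (Matrix.fromCols
              (sel PA * jac2 cI pt * (sel PU)ᵀ)
              (sel PA * jac2 cI pt * (sel PV)ᵀ)))
          (Matrix.fromCols (jac1 cZ pt)
            (Matrix.fromCols
              ((jac2 cZ pt - 1) * (sel PU)ᵀ)
              ((jac2 cZ pt + 1) * (sel PV)ᵀ))))).rank
      = m₁ + Fintype.card {j // PA j} + s) :
    Function.Surjective
      (DGmap cE cI cZ PA (fun i => ¬ PU i) (fun i => ¬ PV i) pt) := by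
  set E1 := jac1 cE pt
  set E2 := jac2 cE pt
  set I1 := jac1 cI pt
  set I2 := jac2 cI pt
  set Z1 := jac1 cZ pt
  set Z2 := jac2 cZ pt
  set M := Matrix.fromRows
        (Matrix.fromCols E1 (Matrix.fromCols (E2 * (sel PU)ᵀ) (E2 * (sel PV)ᵀ)))
        (Matrix.fromRows
          (Matrix.fromCols (sel PA * I1)
            (Matrix.fromCols (sel PA * I2 * (sel PU)ᵀ) (sel PA * I2 * (sel PV)ᵀ)))
          (Matrix.fromCols Z1
            (Matrix.fromCols ((Z2 - 1) * (sel PU)ᵀ) ((Z2 + 1) * (sel PV)ᵀ)))) with hMdef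
  have hsurjM : Function.Surjective M.mulVecLin := by
    apply surj_of_rank_rows
    rw [hrank]
    simp only [Fintype.card_sum, Fintype.card_fin]
    omega
  rintro ⟨e, a, z, p', q'⟩
  set pe : Fin s → ℝ := fun i => if h : ¬ PU i then p' ⟨i, h⟩ else 0 with hpe
  set qe : Fin s → ℝ := fun i => if h : ¬ PV i then q' ⟨i, h⟩ else 0 with hqe
  set r : (Fin m₁ ⊕ ({j // PA j} ⊕ Fin s)) → ℝ := Sum.elim
      (e - E2 *ᵥ (pe + qe))
      (Sum.elim (fun j => a j - (I2 *ᵥ (pe + qe)) j.1)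
        (z - Z2 *ᵥ (pe + qe) + (pe - qe))) with hr
  obtain ⟨ξ, hξ⟩ := hsurjM r
  rw [Matrix.mulVecLin_apply] at hξ
  set wt : Fin n → ℝ := fun j => ξ (Sum.inl j) with hwt
  set ξU : {i // PU i} → ℝ := fun i => ξ (Sum.inr (Sum.inl i)) with hξU
  set ξV : {i // PV i} → ℝ := fun i => ξ (Sum.inr (Sum.inr i)) with hξV
  have hξdecomp : ξ = Sum.elim wt (Sum.elim ξU ξV) := by
    funext x; rcases x with x | x | x <;> rfl
  set uξ : Fin s → ℝ := (sel PU)ᵀ *ᵥ ξU with huξ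
  set vξ : Fin s → ℝ := (sel PV)ᵀ *ᵥ ξV with hvξ
  rw [hξdecomp] at hξ
  -- extract the three block equations
  have hE : E1 *ᵥ wt + E2 *ᵥ uξ + E2 *ᵥ vξ = e - E2 *ᵥ (pe + qe) := by
    have := congrArg (fun v => v ∘ Sum.inl) hξ
    funext i
    have h2 := congrFun this i
    simp only [Function.comp_apply, hMdef, Matrix.fromRows_mulVec, Sum.elim_inl,
      Matrix.fromCols_mulVec_sumElim, hr] at h2
    rw [← h2]
    simp only [Pi.add_apply, Pi.sub_apply, huξ, hvξ, Matrix.mulVec_mulVec]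
    ring
  have hI : ∀ j : {j // PA j},
      ((I1 *ᵥ wt) j.1 + (I2 *ᵥ uξ) j.1 + (I2 *ᵥ vξ) j.1)
        = a j - (I2 *ᵥ (pe + qe)) j.1 := by
    intro j
    have := congrArg (fun v => v (Sum.inr (Sum.inl j))) hξ
    simp only [hMdef, Matrix.fromRows_mulVec, Sum.elim_inr, Sum.elim_inl,
      Matrix.fromCols_mulVec_sumElim, hr] at this
    rw [← this]
    rw [Matrix.mul_assoc (sel PA) I2 ((sel PU)ᵀ), Matrix.mul_assoc (sel PA) I2 ((sel PV)ᵀ)]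
    simp only [Pi.add_apply, sel_mul_mulVec, huξ, hvξ, Matrix.mulVec_mulVec]
    ring
  have hZ : Z1 *ᵥ wt + (Z2 *ᵥ uξ - uξ) + (Z2 *ᵥ vξ + vξ)
      = z - Z2 *ᵥ (pe + qe) + (pe - qe) := by
    have := congrArg (fun v => v ∘ Sum.inr ∘ Sum.inr) hξ
    funext i
    have h2 := congrFun this i
    simp only [Function.comp_apply, hMdef, Matrix.fromRows_mulVec, Sum.elim_inr,
      Matrix.fromCols_mulVec_sumElim, hr] at h2
    rw [← h2]
    have e1 : ((Z2 - 1) * (sel PU)ᵀ) *ᵥ ξU = Z2 *ᵥ uξ - uξ := by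
      rw [← Matrix.mulVec_mulVec, Matrix.sub_mulVec, Matrix.one_mulVec, huξ]
    have e2 : ((Z2 + 1) * (sel PV)ᵀ) *ᵥ ξV = Z2 *ᵥ vξ + vξ := by
      rw [← Matrix.mulVec_mulVec, Matrix.add_mulVec, Matrix.one_mulVec, hvξ]
    rw [e1, e2]
    simp only [Pi.add_apply, Pi.sub_apply]
    ring
  refine ⟨(wt, pe + uξ, qe + vξ), ?_⟩
  rw [DGmap_apply]
  have huξ0 : ∀ i : Fin s, ¬ PU i → uξ i = 0 := by
    intro i hi
    rw [huξ, selT_mulVec]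
    exact dif_neg (by simpa using hi)
  have hvξ0 : ∀ i : Fin s, ¬ PV i → vξ i = 0 := by
    intro i hi
    rw [hvξ, selT_mulVec]
    exact dif_neg (by simpa using hi)
  refine Prod.ext ?_ (Prod.ext ?_ (Prod.ext ?_ (Prod.ext ?_ ?_)))
  · show E1 *ᵥ wt + E2 *ᵥ (pe + uξ + (qe + vξ)) = e
    funext i
    have h3 := congrFun hE i
    have hre : (pe + uξ + (qe + vξ)) = uξ + vξ + (pe + qe) := by abel
    rw [hre, Matrix.mulVec_add, Matrix.mulVec_add]
    simp only [Pi.add_apply, Pi.sub_apply] at h3 ⊢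
    linarith
  · show (fun j : {j // PA j} => (I1 *ᵥ wt + I2 *ᵥ (pe + uξ + (qe + vξ))) j.1) = a
    funext j
    have h3 := hI j
    have hre : (pe + uξ + (qe + vξ)) = uξ + vξ + (pe + qe) := by abel
    rw [hre, Matrix.mulVec_add, Matrix.mulVec_add]
    simp only [Pi.add_apply, Pi.sub_apply] at h3 ⊢
    linarith
  · show Z1 *ᵥ wt + Z2 *ᵥ (pe + uξ + (qe + vξ)) - (pe + uξ - (qe + vξ)) = z
    funext i
    have h3 := congrFun hZ i
    have hre : (pe + uξ + (qe + vξ)) = uξ + vξ + (pe + qe) := by abel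
    rw [hre, Matrix.mulVec_add, Matrix.mulVec_add]
    simp only [Pi.add_apply, Pi.sub_apply] at h3 ⊢
    linarith
  · show (fun i : {i // ¬ PU i} => (pe + uξ) i.1) = p'
    funext i
    simp only [Pi.add_apply]
    rw [huξ0 i.1 i.2, add_zero]
    simp [hpe, i.2]
  · show (fun i : {i // ¬ PV i} => (qe + vξ) i.1) = q'
    funext i
    simp only [Pi.add_apply]
    rw [hvξ0 i.1 i.2, add_zero]
    simp [hqe, i.2]

end Surj

/-- 1-D second-order necessary condition -/
lemma second_order_test {g g' : ℝ → ℝ} {c : ℝ}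
    (hg : ∀ᶠ τ in 𝓝 (0:ℝ), HasDerivAt g (g' τ) τ)
    (hg' : HasDerivAt g' c 0) (hmin : IsLocalMin g 0) : 0 ≤ c := by
  by_contra hc
  push_neg at hc
  have hg0 : g' 0 = 0 := by
    have hd : deriv g 0 = g' 0 := (hg.self_of_nhds).deriv
    rw [← hd]; exact hmin.deriv_eq_zero
  -- slope of g' tends to c < 0, so g' < 0 on a right interval
  have hslope := hasDerivAt_iff_tendsto_slope.1 hg'
  have hneg : ∀ᶠ τ in 𝓝[>] (0:ℝ), g' τ < 0 := by
    have h1 : ∀ᶠ τ in 𝓝[≠] (0:ℝ), slope g' 0 τ < c / 2 := by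
      apply hslope.eventually (Filter.Tendsto.eventually_lt_const ?_ tendsto_id)
      · linarith
    have h2 : 𝓝[>] (0:ℝ) ≤ 𝓝[≠] (0:ℝ) :=
      nhdsWithin_mono _ (fun x hx => ne_of_gt hx)
    filter_upwards [h2 h1, self_mem_nhdsWithin] with τ hτ hτpos
    rw [slope_def_field, hg0, sub_zero, sub_zero, div_eq_inv_mul] at hτ
    have hτpos' : (0:ℝ) < τ := hτpos
    have : g' τ < τ * (c/2) := by
      have := (mul_lt_mul_iff_right₀ hτpos').2 hτ
      rwa [mul_inv_cancel_left₀ (ne_of_gt hτpos')] at this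
    have : τ * (c/2) < 0 := mul_neg_of_pos_of_neg hτpos' (by linarith)
    linarith
  rw [eventually_nhdsWithin_iff] at hneg
  obtain ⟨ε₁, hε₁, h₁⟩ := Metric.eventually_nhds_iff.1 hneg
  obtain ⟨ε₂, hε₂, h₂⟩ := Metric.eventually_nhds_iff.1 hg
  obtain ⟨ε₃, hε₃, h₃⟩ := Metric.eventually_nhds_iff.1 (hmin.filter_mono (le_refl _))
  set ε := min ε₁ (min ε₂ ε₃) / 2 with hε
  have hεpos : 0 < ε := by positivity
  have hmem : ∀ x ∈ Set.Icc (0:ℝ) ε, dist x 0 < min ε₁ (min ε₂ ε₃) := by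
    intro x hx
    rw [Real.dist_eq, sub_zero, abs_of_nonneg hx.1]
    have := hx.2
    have hm : 0 < min ε₁ (min ε₂ ε₃) := lt_min hε₁ (lt_min hε₂ hε₃)
    have : ε < min ε₁ (min ε₂ ε₃) := by rw [hε]; linarith
    linarith [hx.2]
  have hanti : StrictAntiOn g (Set.Icc (0:ℝ) ε) := by
    apply strictAntiOn_of_deriv_neg (convex_Icc _ _)
    · intro x hx
      exact (h₂ (lt_of_lt_of_le (hmem x hx) (le_trans (min_le_right _ _) (min_le_left _ _)))).continuousAt.continuousWithinAt
    · intro x hx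
      rw [interior_Icc] at hx
      have hd := h₂ (lt_of_lt_of_le (hmem x ⟨le_of_lt hx.1, le_of_lt hx.2⟩) (le_trans (min_le_right _ _) (min_le_left _ _)))
      rw [hd.deriv]
      exact h₁ (lt_of_lt_of_le (hmem x ⟨le_of_lt hx.1, le_of_lt hx.2⟩) (min_le_left _ _)) hx.1
  have : g ε < g 0 := hanti (Set.left_mem_Icc.2 (le_of_lt hεpos)) (Set.right_mem_Icc.2 (le_of_lt hεpos)) hεpos
  have : g 0 ≤ g ε := h₃ (lt_of_lt_of_le (hmem ε ⟨le_of_lt hεpos, le_refl _⟩) (le_trans (min_le_right _ _) (min_le_right _ _)))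
  linarith


set_option maxHeartbeats 2000000 in
set_option synthInstance.maxHeartbeats 1000000 in
/-- Second order necessary conditions for the counterpart MPCC under MPCC-LICQ and
MPCC-strict complementarity. -/
theorem stmt13 {n s m₁ m₂ : ℕ}
    (Dt : Set (Fin n → ℝ)) (Dz : Set (Fin s → ℝ))
    (hDt : IsOpen Dt) (hDz : IsOpen Dz)
    (hsym : ∀ z ∈ Dz, ∀ σ : Fin s → ℝ, (∀ i, σ i = -1 ∨ σ i = 0 ∨ σ i = 1) →
      (fun i => σ i * z i) ∈ Dz)
    (f : (Fin n → ℝ) → ℝ)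
    (cE : (Fin n → ℝ) × (Fin s → ℝ) → Fin m₁ → ℝ)
    (cI : (Fin n → ℝ) × (Fin s → ℝ) → Fin m₂ → ℝ)
    (cZ : (Fin n → ℝ) × (Fin s → ℝ) → Fin s → ℝ)
    (hf : ContDiffOn ℝ 2 f Dt)
    (hcE : ContDiffOn ℝ 2 cE (Dt ×ˢ Dz))
    (hcI : ContDiffOn ℝ 2 cI (Dt ×ˢ Dz))
    (hcZ : ContDiffOn ℝ 2 cZ (Dt ×ˢ Dz))
    (tstar : Fin n → ℝ) (ustar vstar : Fin s → ℝ)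
    (ht : tstar ∈ Dt) (huv : ustar + vstar ∈ Dz)
    (hu : ∀ i, 0 ≤ ustar i) (hv : ∀ i, 0 ≤ vstar i)
    (hcompl : ∀ i, ustar i * vstar i = 0)
    (hfeasE : cE (tstar, ustar + vstar) = 0)
    (hfeasI : ∀ j, 0 ≤ cI (tstar, ustar + vstar) j)
    (hfeasZ : cZ (tstar, ustar + vstar) = ustar - vstar)
    (hmin : IsLocalMinOn
      (fun q : (Fin n → ℝ) × (Fin s → ℝ) × (Fin s → ℝ) => f q.1)
      {q | q.1 ∈ Dt ∧ q.2.1 + q.2.2 ∈ Dz ∧ (∀ i, 0 ≤ q.2.1 i) ∧ (∀ i, 0 ≤ q.2.2 i) ∧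
        (∀ i, q.2.1 i * q.2.2 i = 0) ∧ cE (q.1, q.2.1 + q.2.2) = 0 ∧
        (∀ j, 0 ≤ cI (q.1, q.2.1 + q.2.2) j) ∧
        cZ (q.1, q.2.1 + q.2.2) = q.2.1 - q.2.2}
      (tstar, ustar, vstar))
    -- MPCC-LICQ
    (hLICQ :
      (Matrix.fromRows
        (Matrix.fromCols (jac1 cE (tstar, ustar + vstar))
          (Matrix.fromCols
            (jac2 cE (tstar, ustar + vstar) * (sel fun i => 0 < ustar i)ᵀ)
            (jac2 cE (tstar, ustar + vstar) * (sel fun i => 0 < vstar i)ᵀ)))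
        (Matrix.fromRows
          (Matrix.fromCols
            (sel (fun j => cI (tstar, ustar + vstar) j = 0) * jac1 cI (tstar, ustar + vstar))
            (Matrix.fromCols
              (sel (fun j => cI (tstar, ustar + vstar) j = 0) *
                jac2 cI (tstar, ustar + vstar) * (sel fun i => 0 < ustar i)ᵀ)
              (sel (fun j => cI (tstar, ustar + vstar) j = 0) *
                jac2 cI (tstar, ustar + vstar) * (sel fun i => 0 < vstar i)ᵀ)))
          (Matrix.fromCols (jac1 cZ (tstar, ustar + vstar))
            (Matrix.fromCols
              ((jac2 cZ (tstar, ustar + vstar) - 1) * (sel fun i => 0 < ustar i)ᵀ)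
              ((jac2 cZ (tstar, ustar + vstar) + 1) * (sel fun i => 0 < vstar i)ᵀ))))).rank
      = m₁ + Fintype.card {j // cI (tstar, ustar + vstar) j = 0} + s)
    -- S-stationarity with multipliers (lE, lI, lZ, μu, μv)
    (lE : Fin m₁ → ℝ) (lI : Fin m₂ → ℝ) (lZ : Fin s → ℝ) (μu μv : Fin s → ℝ)
    (hstat : (fun j => fderiv ℝ f tstar (Pi.single j 1)) +
      (jac1 cE (tstar, ustar + vstar))ᵀ *ᵥ lE -
      (jac1 cI (tstar, ustar + vstar))ᵀ *ᵥ lI +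
      (jac1 cZ (tstar, ustar + vstar))ᵀ *ᵥ lZ = 0)
    (hμu : μu = (jac2 cE (tstar, ustar + vstar))ᵀ *ᵥ lE -
      (jac2 cI (tstar, ustar + vstar))ᵀ *ᵥ lI +
      (jac2 cZ (tstar, ustar + vstar) - 1)ᵀ *ᵥ lZ)
    (hμv : μv = (jac2 cE (tstar, ustar + vstar))ᵀ *ᵥ lE -
      (jac2 cI (tstar, ustar + vstar))ᵀ *ᵥ lI +
      (jac2 cZ (tstar, ustar + vstar) + 1)ᵀ *ᵥ lZ)
    (hμD : ∀ i, ustar i = 0 ∧ vstar i = 0 → 0 ≤ μu i ∧ 0 ≤ μv i)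
    (hμU : ∀ i, 0 < ustar i → μu i = 0)
    (hμV : ∀ i, 0 < vstar i → μv i = 0)
    (hlI : ∀ j, 0 ≤ lI j)
    (hlIc : lI ⬝ᵥ cI (tstar, ustar + vstar) = 0)
    -- MPCC-strict complementarity
    (hsc1 : ∀ j, cI (tstar, ustar + vstar) j = 0 → 0 < lI j)
    (hsc2 : ∀ i, ustar i = 0 ∧ vstar i = 0 → 0 < μu i ∧ 0 < μv i) :
    ∀ (dt : Fin n → ℝ) (du dv : Fin s → ℝ),
      jac1 cE (tstar, ustar + vstar) *ᵥ dt +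
        jac2 cE (tstar, ustar + vstar) *ᵥ (du + dv) = 0 →
      (∀ j, cI (tstar, ustar + vstar) j = 0 →
        (jac1 cI (tstar, ustar + vstar) *ᵥ dt +
          jac2 cI (tstar, ustar + vstar) *ᵥ (du + dv)) j = 0) →
      jac1 cZ (tstar, ustar + vstar) *ᵥ dt +
        (jac2 cZ (tstar, ustar + vstar) - 1) *ᵥ du +
        (jac2 cZ (tstar, ustar + vstar) + 1) *ᵥ dv = 0 →
      (∀ i, 0 < vstar i ∨ (ustar i = 0 ∧ vstar i = 0) → du i = 0) →
      (∀ i, 0 < ustar i ∨ (ustar i = 0 ∧ vstar i = 0) → dv i = 0) →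
      0 ≤ fderiv ℝ (fderiv ℝ (Lc f cE cI cZ lE lI lZ))
            (tstar, ustar, vstar) (dt, du, dv) (dt, du, dv) := by
  intro dt du dv h1 h2 h3 h4 h5
  have husz : ∀ i, ¬ 0 < ustar i → ustar i = 0 := fun i hi => le_antisymm (not_lt.1 hi) (hu i)
  have hvsz : ∀ i, ¬ 0 < vstar i → vstar i = 0 := fun i hi => le_antisymm (not_lt.1 hi) (hv i)
  set ps : (Fin n → ℝ) × (Fin s → ℝ) := (tstar, ustar + vstar) with hps
  set xs : (Fin n → ℝ) × (Fin s → ℝ) × (Fin s → ℝ) := (tstar, ustar, vstar) with hxs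
  have hpsmem : ps ∈ Dt ×ˢ Dz := ⟨ht, huv⟩
  have hpsn : Dt ×ˢ Dz ∈ 𝓝 ps := (hDt.prod hDz).mem_nhds hpsmem
  have hcE2 : ContDiffAt ℝ 2 cE ps := hcE.contDiffAt hpsn
  have hcI2 : ContDiffAt ℝ 2 cI ps := hcI.contDiffAt hpsn
  have hcZ2 : ContDiffAt ℝ 2 cZ ps := hcZ.contDiffAt hpsn
  have hf2 : ContDiffAt ℝ 2 f tstar := hf.contDiffAt (hDt.mem_nhds ht)
  set O : Set ((Fin n → ℝ) × (Fin s → ℝ) × (Fin s → ℝ)) :=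
    (phiL n s) ⁻¹' (Dt ×ˢ Dz) with hO
  have hOopen : IsOpen O := (hDt.prod hDz).preimage (phiL n s).continuous
  have hxsO : xs ∈ O := hpsmem
  set L := Lc f cE cI cZ lE lI lZ with hL
  -- Lc is C² at xs
  have hLc2 : ContDiffAt ℝ 2 L xs := by
    have heq : L = fun x =>
        f x.1 + dotL lE (cE (phiL n s x)) - dotL lI (cI (phiL n s x)) +
          dotL lZ (cZ (phiL n s x) - psiL n s x) := by
      funext x; simp [hL, Lc]
    rw [heq]
    have c1 : ContDiffAt ℝ 2 (fun x : (Fin n → ℝ) × (Fin s → ℝ) × (Fin s → ℝ) => f x.1) xs :=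
      hf2.comp xs contDiff_fst.contDiffAt
    have c2 := ((dotL lE).contDiff.contDiffAt).comp xs
      (hcE2.comp xs (phiL n s).contDiff.contDiffAt)
    have c3 := ((dotL lI).contDiff.contDiffAt).comp xs
      (hcI2.comp xs (phiL n s).contDiff.contDiffAt)
    have c4 := ((dotL lZ).contDiff.contDiffAt).comp xs
      ((hcZ2.comp xs (phiL n s).contDiff.contDiffAt).sub (psiL n s).contDiff.contDiffAt)
    exact ((c1.add c2).sub c3).add c4
  -- derivative of Lc on O
  have hLder : ∀ y ∈ O, HasFDerivAt L (DL f cE cI cZ lE lI lZ y) y := by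
    intro y hy
    have hmem : phiL n s y ∈ Dt ×ˢ Dz := hy
    have hnn := (hDt.prod hDz).mem_nhds hmem
    exact hasFDerivAt_Lc lE lI lZ
      ((hf.contDiffAt (hDt.mem_nhds hmem.1)).differentiableAt two_ne_zero)
      ((hcE.contDiffAt hnn).differentiableAt two_ne_zero)
      ((hcI.contDiffAt hnn).differentiableAt two_ne_zero)
      ((hcZ.contDiffAt hnn).differentiableAt two_ne_zero)
  -- gradient of Lc vanishes on the subspace
  have hgrad : ∀ w : (Fin n → ℝ) × (Fin s → ℝ) × (Fin s → ℝ),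
      (∀ i, ¬ 0 < ustar i → w.2.1 i = 0) → (∀ i, ¬ 0 < vstar i → w.2.2 i = 0) →
      DL f cE cI cZ lE lI lZ xs w = 0 := by
    intro w hwu hwv
    have hphixs0 : phiL n s xs = ps := rfl
    have hzu : μu ⬝ᵥ w.2.1 = 0 := by
      apply Finset.sum_eq_zero
      intro i _
      by_cases hiu : 0 < ustar i
      · rw [hμU i hiu, zero_mul]
      · rw [hwu i hiu, mul_zero]
    have hzv : μv ⬝ᵥ w.2.2 = 0 := by
      apply Finset.sum_eq_zero
      intro i _
      by_cases hiv : 0 < vstar i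
      · rw [hμV i hiv, zero_mul]
      · rw [hwv i hiv, mul_zero]
    have hstatw : ((fun j => fderiv ℝ f tstar (Pi.single j 1)) + (jac1 cE ps)ᵀ *ᵥ lE -
        (jac1 cI ps)ᵀ *ᵥ lI + (jac1 cZ ps)ᵀ *ᵥ lZ) ⬝ᵥ w.1 = 0 := by
      rw [hstat, zero_dotProduct]
    rw [DL_apply]
    simp only [hphixs0]
    rw [show fderiv ℝ f xs.1 w.1 = (fun j => fderiv ℝ f tstar (Pi.single j 1)) ⬝ᵥ w.1 from
      fderiv_pi_apply f tstar w.1]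
    have main : (fun j => fderiv ℝ f tstar (Pi.single j 1)) ⬝ᵥ w.1 +
        lE ⬝ᵥ (jac1 cE ps *ᵥ w.1 + jac2 cE ps *ᵥ (w.2.1 + w.2.2)) -
        lI ⬝ᵥ (jac1 cI ps *ᵥ w.1 + jac2 cI ps *ᵥ (w.2.1 + w.2.2)) +
        lZ ⬝ᵥ ((jac1 cZ ps *ᵥ w.1 + jac2 cZ ps *ᵥ (w.2.1 + w.2.2)) - (w.2.1 - w.2.2)) =
        ((fun j => fderiv ℝ f tstar (Pi.single j 1)) + (jac1 cE ps)ᵀ *ᵥ lE -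
          (jac1 cI ps)ᵀ *ᵥ lI + (jac1 cZ ps)ᵀ *ᵥ lZ) ⬝ᵥ w.1 +
          μu ⬝ᵥ w.2.1 + μv ⬝ᵥ w.2.2 := by
      rw [hμu, hμv]
      simp only [Matrix.dotProduct_mulVec, Matrix.mulVec_transpose, Matrix.transpose_sub,
        Matrix.transpose_add, Matrix.transpose_one, Matrix.sub_mulVec, Matrix.add_mulVec,
        Matrix.one_mulVec, Matrix.mulVec_add, add_dotProduct, sub_dotProduct,
        dotProduct_add, dotProduct_sub]
      ring
    rw [main, hstatw, hzu, hzv]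
    ring
  -- the constraint map
  set QA : Fin m₂ → Prop := fun j => cI ps j = 0 with hQA
  set QU : Fin s → Prop := fun i => ¬ 0 < ustar i with hQU
  set QV : Fin s → Prop := fun i => ¬ 0 < vstar i with hQV
  set Gm := Gmap cE cI cZ QA QU QV with hGm
  set DG := DGmap cE cI cZ QA QU QV ps with hDGdef
  have hphixs : phiL n s xs = ps := rfl
  have hDGsurj : Function.Surjective DG :=
    DG_surj cE cI cZ ps (fun j => cI ps j = 0) (fun i => 0 < ustar i)
      (fun i => 0 < vstar i) hLICQ
  have hGder : HasFDerivAt Gm DG xs := by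
    have h := hasFDerivAt_Gmap (y := xs) QA QU QV
      (hcE2.differentiableAt two_ne_zero) (hcI2.differentiableAt two_ne_zero)
      (hcZ2.differentiableAt two_ne_zero)
    rwa [hphixs] at h
  have hGcd : ContDiffAt ℝ 2 Gm xs := contDiffAt_Gmap QA QU QV hcE2 hcI2 hcZ2
  have hGxs : Gm xs = 0 := by
    rw [hGm]
    refine Prod.ext ?_ (Prod.ext ?_ (Prod.ext ?_ (Prod.ext ?_ ?_)))
    · show cE (phiL n s xs) = 0
      rw [hphixs]
      exact hfeasE
    · show cpi QA (cI (phiL n s xs)) = 0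
      funext j
      simp only [cpi_apply, hphixs]
      exact j.2
    · show cZ (phiL n s xs) - psiL n s xs = 0
      rw [hphixs, hfeasZ]
      have : psiL n s xs = ustar - vstar := rfl
      rw [this, sub_self]
    · show cpi QU xs.2.1 = 0
      funext i
      simp only [cpi_apply]
      exact husz i.1 i.2
    · show cpi QV xs.2.2 = 0
      funext i
      simp only [cpi_apply]
      exact hvsz i.1 i.2
  have hDGd : DG (dt, du, dv) = 0 := by
    rw [hDGdef, DGmap_apply]
    refine Prod.ext ?_ (Prod.ext ?_ (Prod.ext ?_ (Prod.ext ?_ ?_)))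
    · exact h1
    · funext j
      exact h2 j.1 j.2
    · show (jac1 cZ ps *ᵥ dt + jac2 cZ ps *ᵥ (du + dv)) - (du - dv) = 0
      funext i
      have h3i := congrFun h3 i
      simp only [Matrix.sub_mulVec, Matrix.add_mulVec, Matrix.one_mulVec,
        Matrix.mulVec_add, Pi.add_apply, Pi.sub_apply, Pi.zero_apply] at h3i ⊢
      linarith
    · funext i
      show du i.1 = 0
      refine h4 i.1 ?_
      by_cases hvi : 0 < vstar i.1
      · exact Or.inl hvi
      · exact Or.inr ⟨husz i.1 i.2, hvsz i.1 hvi⟩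
    · funext i
      show dv i.1 = 0
      refine h5 i.1 ?_
      by_cases hui : 0 < ustar i.1
      · exact Or.inl hui
      · exact Or.inr ⟨husz i.1 hui, hvsz i.1 i.2⟩
  -- the kernel and a complement
  set DGl := DG.toLinearMap with hDGl
  set K := LinearMap.ker DGl with hK
  obtain ⟨Q, hQ⟩ := Submodule.exists_isCompl K
  set πl := K.linearProjOfIsCompl Q hQ with hπl
  set πc := LinearMap.toContinuousLinearMap πl with hπc
  set DΦ := DG.prod πc with hDΦ
  set Φf := fun x => (Gm x, πc x) with hΦf
  have hΦder : HasFDerivAt Φf DΦ xs := hGder.prodMk πc.hasFDerivAt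
  have hΦcd : ContDiffAt ℝ 2 Φf xs := hGcd.prodMk πc.contDiff.contDiffAt
  have hinj : Function.Injective DΦ := by
    rw [injective_iff_map_eq_zero]
    intro w hw
    have hw1 : DG w = 0 := congrArg Prod.fst hw
    have hw2 : πc w = 0 := congrArg Prod.snd hw
    have hwK : w ∈ K := LinearMap.mem_ker.2 hw1
    have := Submodule.linearProjOfIsCompl_apply_left hQ (⟨w, hwK⟩ : K)
    rw [hπc] at hw2
    have h0 : (⟨w, hwK⟩ : K) = 0 := by
      rw [← this]
      exact hw2
    exact congrArg Subtype.val h0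
  have hbij : Function.Bijective DΦ := by
    refine ⟨hinj, ?_⟩
    have hrk := LinearMap.finrank_range_add_finrank_ker DGl
    have hRtop : LinearMap.range DGl = ⊤ := LinearMap.range_eq_top.2 hDGsurj
    have hfr : Module.finrank ℝ ((Fin m₁ → ℝ) × ({j // QA j} → ℝ) × (Fin s → ℝ) ×
        ({i // QU i} → ℝ) × ({i // QV i} → ℝ)) + Module.finrank ℝ K
        = Module.finrank ℝ ((Fin n → ℝ) × (Fin s → ℝ) × (Fin s → ℝ)) := by
      rw [← hrk, hRtop]
      simp [hK]
      rfl
    have h2 : Module.finrank ℝ (((Fin m₁ → ℝ) × ({j // QA j} → ℝ) × (Fin s → ℝ) ×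
        ({i // QU i} → ℝ) × ({i // QV i} → ℝ)) × K)
        = Module.finrank ℝ ((Fin n → ℝ) × (Fin s → ℝ) × (Fin s → ℝ)) := by
      rw [Module.finrank_prod, hfr]
    set DΦl := DΦ.toLinearMap with hDΦl
    have h3 : Module.finrank ℝ (LinearMap.range DΦl)
        = Module.finrank ℝ ((Fin n → ℝ) × (Fin s → ℝ) × (Fin s → ℝ)) :=
      LinearMap.finrank_range_of_inj hinj
    have h4 : LinearMap.range DΦl = ⊤ :=
      Submodule.eq_top_of_finrank_eq (by rw [h3, ← h2])
    exact LinearMap.range_eq_top.1 h4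
  -- the continuous linear equivalence
  set eΦ := (LinearEquiv.ofBijective DΦ.toLinearMap hbij).toContinuousLinearEquiv with heΦdef
  have heΦcoe : (eΦ : ((Fin n → ℝ) × (Fin s → ℝ) × (Fin s → ℝ)) →L[ℝ] _) = DΦ :=
    ContinuousLinearMap.ext fun w => rfl
  have hΦder' : HasFDerivAt Φf (eΦ : ((Fin n → ℝ) × (Fin s → ℝ) × (Fin s → ℝ)) →L[ℝ] _) xs := by
    rw [heΦcoe]; exact hΦder
  have hone : (2 : WithTop ℕ∞) ≠ 0 := two_ne_zero
  have hstrict : HasStrictFDerivAt Φf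
      (eΦ : ((Fin n → ℝ) × (Fin s → ℝ) × (Fin s → ℝ)) →L[ℝ] _) xs :=
    hΦcd.hasStrictFDerivAt' hΦder' hone
  set ψ := hstrict.localInverse Φf eΦ xs with hψdef
  have hψcd : ContDiffAt ℝ 2 ψ (Φf xs) := hΦcd.to_localInverse hΦder' hone
  have hψright : ∀ᶠ z in 𝓝 (Φf xs), Φf (ψ z) = z := hstrict.eventually_right_inverse
  have hψxs : ψ (Φf xs) = xs := hstrict.localInverse_apply_image
  have hψder : HasFDerivAt ψ (eΦ.symm :
      _ →L[ℝ] ((Fin n → ℝ) × (Fin s → ℝ) × (Fin s → ℝ))) (Φf xs) :=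
    hstrict.to_localInverse.hasFDerivAt
  -- direction in the kernel
  have hdK : (dt, du, dv) ∈ K := LinearMap.mem_ker.2 hDGd
  set dK : K := ⟨(dt, du, dv), hdK⟩ with hdKdef
  set cv := fun τ : ℝ => ((0 : (Fin m₁ → ℝ) × ({j // QA j} → ℝ) × (Fin s → ℝ) ×
      ({i // QU i} → ℝ) × ({i // QV i} → ℝ)), πc xs + τ • dK) with hcvdef
  have hcv0 : cv 0 = Φf xs := by
    show ((0 : _), πc xs + (0:ℝ) • dK) = (Gm xs, πc xs)
    rw [zero_smul, add_zero, hGxs]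
  set ycv := fun τ : ℝ => ψ (cv τ) with hycvdef
  have hcvcd : ContDiff ℝ 2 cv := by
    apply ContDiff.prodMk contDiff_const
    exact contDiff_const.add (contDiff_id.smul contDiff_const)
  have hycd : ContDiffAt ℝ 2 ycv 0 :=
    ContDiffAt.comp 0 (hcv0 ▸ hψcd) hcvcd.contDiffAt
  have hy0 : ycv 0 = xs := by
    show ψ (cv 0) = xs
    rw [hcv0, hψxs]
  have hytends : Filter.Tendsto ycv (𝓝 0) (𝓝 xs) := by
    rw [← hy0]; exact hycd.continuousAt
  have hyright : ∀ᶠ τ in 𝓝 (0:ℝ), Φf (ycv τ) = cv τ := by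
    have hcvt : Filter.Tendsto cv (𝓝 0) (𝓝 (Φf xs)) := by
      rw [← hcv0]; exact hcvcd.continuous.continuousAt
    exact hcvt.eventually hψright
  have hG0 : ∀ᶠ τ in 𝓝 (0:ℝ), Gm (ycv τ) = 0 := by
    filter_upwards [hyright] with τ hτ
    have h := congrArg Prod.fst hτ
    simpa [hcvdef] using h
  -- derivative of the curve at 0
  have hcvder : HasDerivAt cv ((0 : (Fin m₁ → ℝ) × ({j // QA j} → ℝ) × (Fin s → ℝ) ×
      ({i // QU i} → ℝ) × ({i // QV i} → ℝ)), dK) 0 := by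
    apply HasDerivAt.prodMk (hasDerivAt_const _ _)
    have h := ((hasDerivAt_id (0:ℝ)).smul_const dK).const_add (πc xs)
    simpa using h
  have hyder : HasDerivAt ycv (dt, du, dv) 0 := by
    have h := (hcv0 ▸ hψder).comp_hasDerivAt 0 hcvder
    have h2 : eΦ (dt, du, dv) = ((0 : (Fin m₁ → ℝ) × ({j // QA j} → ℝ) × (Fin s → ℝ) × ({i // QU i} → ℝ) × ({i // QV i} → ℝ)), dK) := by
      have h3 : DΦ (dt, du, dv) = ((0 : (Fin m₁ → ℝ) × ({j // QA j} → ℝ) × (Fin s → ℝ) × ({i // QU i} → ℝ) × ({i // QV i} → ℝ)), dK) := by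
        refine Prod.ext ?_ ?_
        · exact hDGd
        · exact Submodule.linearProjOfIsCompl_apply_left hQ dK
      rw [← ContinuousLinearEquiv.coe_coe, heΦcoe]
      exact h3
    have heq : (eΦ.symm : _ →L[ℝ] ((Fin n → ℝ) × (Fin s → ℝ) × (Fin s → ℝ)))
        ((0 : (Fin m₁ → ℝ) × ({j // QA j} → ℝ) × (Fin s → ℝ) × ({i // QU i} → ℝ) × ({i // QV i} → ℝ)), dK) = (dt, du, dv) := by
      show eΦ.symm ((0 : (Fin m₁ → ℝ) × ({j // QA j} → ℝ) × (Fin s → ℝ) × ({i // QU i} → ℝ) × ({i // QV i} → ℝ)), dK) = (dt, du, dv)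
      rw [ContinuousLinearEquiv.symm_apply_eq]
      exact h2.symm
    rw [heq] at h
    exact h
  have hyderiv0 : deriv ycv 0 = (dt, du, dv) := hyder.deriv
  -- a C² window for the curve
  obtain ⟨W, hWmem, hWy⟩ := hycd.contDiffOn le_rfl (by norm_num)
  obtain ⟨W₀, hW₀sub, hW₀open, hW₀mem⟩ := mem_nhds_iff.1 hWmem
  have hW₀y : ContDiffOn ℝ 2 ycv W₀ := hWy.mono hW₀sub
  have hyevd : ∀ τ ∈ W₀, HasDerivAt ycv (deriv ycv τ) τ := fun τ hτ =>
    ((hW₀y.differentiableOn two_ne_zero).differentiableAt (hW₀open.mem_nhds hτ)).hasDerivAt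
  have hdercd : ContDiffOn ℝ 1 (deriv ycv) W₀ :=
    hW₀y.deriv_of_isOpen hW₀open (by norm_num)
  have hud : DifferentiableAt ℝ (deriv ycv) 0 :=
    (hdercd.differentiableOn one_ne_zero).differentiableAt (hW₀open.mem_nhds hW₀mem)
  set u2 := deriv (deriv ycv) 0 with hu2def
  have huder : HasDerivAt (deriv ycv) u2 0 := hud.hasDerivAt
  -- second derivative of Lc at xs
  set B := fderiv ℝ (fderiv ℝ L) xs with hBdef
  have hBder' : HasFDerivAt (fderiv ℝ L) B (ycv 0) := by
    rw [hy0]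
    have h1 : ContDiffAt ℝ 1 (fderiv ℝ L) xs := hLc2.fderiv_right (by norm_num)
    exact (h1.differentiableAt one_ne_zero).hasFDerivAt
  have hA : HasDerivAt (fun τ => fderiv ℝ L (ycv τ)) (B (dt, du, dv)) 0 := by
    have h := hBder'.comp_hasDerivAt 0 hyder
    exact h
  have hg'der : HasDerivAt (fun τ => fderiv ℝ L (ycv τ) (deriv ycv τ))
      (B (dt, du, dv) (deriv ycv 0) + fderiv ℝ L (ycv 0) u2) 0 := hA.clm_apply huder
  -- eventual feasibility facts
  have hWev : ∀ᶠ τ in 𝓝 (0:ℝ), τ ∈ W₀ := hW₀open.mem_nhds hW₀mem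
  have hOev : ∀ᶠ τ in 𝓝 (0:ℝ), ycv τ ∈ O := hytends (hOopen.mem_nhds hxsO)
  have hUev : ∀ᶠ τ in 𝓝 (0:ℝ), ∀ i, 0 < ustar i → 0 < (ycv τ).2.1 i := by
    rw [eventually_all]
    intro i
    by_cases hi : 0 < ustar i
    · have hop : IsOpen {x : (Fin n → ℝ) × (Fin s → ℝ) × (Fin s → ℝ) | 0 < x.2.1 i} :=
        isOpen_lt continuous_const ((continuous_apply i).comp (continuous_fst.comp continuous_snd))
      filter_upwards [hytends (hop.mem_nhds hi)] with τ hτ _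
      exact hτ
    · filter_upwards with τ h
      exact absurd h hi
  have hVev : ∀ᶠ τ in 𝓝 (0:ℝ), ∀ i, 0 < vstar i → 0 < (ycv τ).2.2 i := by
    rw [eventually_all]
    intro i
    by_cases hi : 0 < vstar i
    · have hop : IsOpen {x : (Fin n → ℝ) × (Fin s → ℝ) × (Fin s → ℝ) | 0 < x.2.2 i} :=
        isOpen_lt continuous_const ((continuous_apply i).comp (continuous_snd.comp continuous_snd))
      filter_upwards [hytends (hop.mem_nhds hi)] with τ hτ _
      exact hτ
    · filter_upwards with τ h
      exact absurd h hi
  have hIev : ∀ᶠ τ in 𝓝 (0:ℝ), ∀ j, ¬ (cI ps j = 0) → 0 < cI (phiL n s (ycv τ)) j := by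
    rw [eventually_all]
    intro j
    by_cases hj : cI ps j = 0
    · filter_upwards with τ h
      exact absurd hj h
    · have hjpos : 0 < cI ps j := lt_of_le_of_ne (hfeasI j) (Ne.symm hj)
      have hcont : ContinuousAt (fun x : (Fin n → ℝ) × (Fin s → ℝ) × (Fin s → ℝ) =>
          cI (phiL n s x) j) xs := by
        have hphic : ContinuousAt (phiL n s) xs := (phiL n s).continuous.continuousAt
        have hcc : ContinuousAt cI (phiL n s xs) := hcI2.continuousAt
        have h12 : ContinuousAt (fun x : (Fin n → ℝ) × (Fin s → ℝ) × (Fin s → ℝ) =>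
            cI (phiL n s x)) xs := hcc.comp hphic
        exact (continuous_apply j).continuousAt.comp h12
      have hT : Filter.Tendsto (fun τ => cI (phiL n s (ycv τ)) j) (𝓝 0) (𝓝 (cI ps j)) :=
        hcont.tendsto.comp hytends
      filter_upwards [hT (Ioi_mem_nhds hjpos)] with τ hτ _
      exact hτ
  -- eventual membership in the feasible set
  have hSev : ∀ᶠ τ in 𝓝 (0:ℝ), ycv τ ∈
      {q : (Fin n → ℝ) × (Fin s → ℝ) × (Fin s → ℝ) |
        q.1 ∈ Dt ∧ q.2.1 + q.2.2 ∈ Dz ∧ (∀ i, 0 ≤ q.2.1 i) ∧ (∀ i, 0 ≤ q.2.2 i) ∧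
        (∀ i, q.2.1 i * q.2.2 i = 0) ∧ cE (q.1, q.2.1 + q.2.2) = 0 ∧
        (∀ j, 0 ≤ cI (q.1, q.2.1 + q.2.2) j) ∧
        cZ (q.1, q.2.1 + q.2.2) = q.2.1 - q.2.2} := by
    filter_upwards [hG0, hOev, hUev, hVev, hIev] with τ hGτ hOτ hUτ hVτ hIτ
    have hcE0 : cE (phiL n s (ycv τ)) = 0 := congrArg Prod.fst hGτ
    have hcIA : ∀ j : {j // QA j}, cI (phiL n s (ycv τ)) j.1 = 0 := fun j =>
      congrFun (congrArg (fun z => z.2.1) hGτ) j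
    have hcZ0 : cZ (phiL n s (ycv τ)) - psiL n s (ycv τ) = 0 :=
      congrArg (fun z => z.2.2.1) hGτ
    have hu0 : ∀ i : {i // QU i}, (ycv τ).2.1 i.1 = 0 := fun i =>
      congrFun (congrArg (fun z => z.2.2.2.1) hGτ) i
    have hv0 : ∀ i : {i // QV i}, (ycv τ).2.2 i.1 = 0 := fun i =>
      congrFun (congrArg (fun z => z.2.2.2.2) hGτ) i
    refine ⟨hOτ.1, hOτ.2, ?_, ?_, ?_, hcE0, ?_, ?_⟩
    · intro i
      by_cases hiu : 0 < ustar i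
      · exact le_of_lt (hUτ i hiu)
      · exact le_of_eq (hu0 ⟨i, hiu⟩).symm
    · intro i
      by_cases hiv : 0 < vstar i
      · exact le_of_lt (hVτ i hiv)
      · exact le_of_eq (hv0 ⟨i, hiv⟩).symm
    · intro i
      by_cases hiu : 0 < ustar i
      · have hnv : ¬ 0 < vstar i := fun hvv =>
          absurd (hcompl i) (ne_of_gt (mul_pos hiu hvv))
        rw [hv0 ⟨i, hnv⟩, mul_zero]
      · rw [hu0 ⟨i, hiu⟩, zero_mul]
    · intro j
      by_cases hj : cI ps j = 0
      · exact le_of_eq (hcIA ⟨j, hj⟩).symm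
      · exact le_of_lt (hIτ j hj)
    · exact sub_eq_zero.mp hcZ0
  -- transfer the local minimality
  have hminev : ∀ᶠ τ in 𝓝 (0:ℝ), f tstar ≤ f ((ycv τ).1) := by
    have hytendS : Filter.Tendsto ycv (𝓝 0) (𝓝[{q : (Fin n → ℝ) × (Fin s → ℝ) × (Fin s → ℝ) |
        q.1 ∈ Dt ∧ q.2.1 + q.2.2 ∈ Dz ∧ (∀ i, 0 ≤ q.2.1 i) ∧ (∀ i, 0 ≤ q.2.2 i) ∧
        (∀ i, q.2.1 i * q.2.2 i = 0) ∧ cE (q.1, q.2.1 + q.2.2) = 0 ∧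
        (∀ j, 0 ≤ cI (q.1, q.2.1 + q.2.2) j) ∧
        cZ (q.1, q.2.1 + q.2.2) = q.2.1 - q.2.2}] xs) :=
      tendsto_nhdsWithin_iff.2 ⟨hytends, hSev⟩
    exact hytendS.eventually hmin
  -- lI vanishes off the active set
  have hlI0 : ∀ j, ¬ (cI ps j = 0) → lI j = 0 := by
    intro j hj
    have hsum : ∑ k, lI k * cI ps k = 0 := hlIc
    have hterm := (Finset.sum_eq_zero_iff_of_nonneg
      (fun k _ => mul_nonneg (hlI k) (hfeasI k))).1 hsum j (Finset.mem_univ j)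
    rcases mul_eq_zero.1 hterm with h | h
    · exact h
    · exact absurd h hj
  -- Lc agrees with f on the zero set of Gm
  have hLceq : ∀ x, Gm x = 0 → L x = f x.1 := by
    intro x hx
    have hcE0 : cE (phiL n s x) = 0 := congrArg Prod.fst hx
    have hcIA : ∀ j : {j // QA j}, cI (phiL n s x) j.1 = 0 := fun j =>
      congrFun (congrArg (fun z => z.2.1) hx) j
    have hcZ0 : cZ (phiL n s x) - psiL n s x = 0 := congrArg (fun z => z.2.2.1) hx
    have hIzero : lI ⬝ᵥ cI (x.1, x.2.1 + x.2.2) = 0 := by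
      apply Finset.sum_eq_zero
      intro j _
      by_cases hj : cI ps j = 0
      · rw [show cI (x.1, x.2.1 + x.2.2) j = 0 from hcIA ⟨j, hj⟩, mul_zero]
      · rw [hlI0 j hj, zero_mul]
    show f x.1 + lE ⬝ᵥ cE (x.1, x.2.1 + x.2.2) - lI ⬝ᵥ cI (x.1, x.2.1 + x.2.2) +
      lZ ⬝ᵥ (cZ (x.1, x.2.1 + x.2.2) - (x.2.1 - x.2.2)) = f x.1
    rw [show cE (x.1, x.2.1 + x.2.2) = 0 from hcE0]
    rw [show cZ (x.1, x.2.1 + x.2.2) - (x.2.1 - x.2.2) = 0 from hcZ0]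
    rw [hIzero, dotProduct_zero, dotProduct_zero]
    ring
  -- local minimality of g
  set g : ℝ → ℝ := fun τ => L (ycv τ) with hgdef
  have hgminval : g 0 = f tstar := by
    show L (ycv 0) = f tstar
    rw [hy0]
    exact hLceq xs hGxs
  have hgmin : IsLocalMin g 0 := by
    show ∀ᶠ τ in 𝓝 (0:ℝ), g 0 ≤ g τ
    filter_upwards [hminev, hG0] with τ hfτ hGτ
    rw [hgminval]
    show f tstar ≤ L (ycv τ)
    rw [hLceq _ hGτ]
    exact hfτ
  -- eventual derivative of g
  have hgd : ∀ᶠ τ in 𝓝 (0:ℝ), HasDerivAt g (fderiv ℝ L (ycv τ) (deriv ycv τ)) τ := by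
    filter_upwards [hOev, hWev] with τ hOτ hWτ
    have hd1 := hLder (ycv τ) hOτ
    rw [hd1.fderiv]
    exact hd1.comp_hasDerivAt τ (hyevd τ hWτ)
  -- the second order test
  have hmain : 0 ≤ B (dt, du, dv) (deriv ycv 0) + fderiv ℝ L (ycv 0) u2 :=
    second_order_test hgd hg'der hgmin
  -- the second derivative of the curve stays in the subspace
  have hu2u : ∀ i, ¬ 0 < ustar i → u2.2.1 i = 0 := by
    intro i hi
    set pL : ((Fin n → ℝ) × (Fin s → ℝ) × (Fin s → ℝ)) →L[ℝ] ℝ :=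
      (ContinuousLinearMap.proj i).comp
        ((ContinuousLinearMap.fst ℝ _ _).comp (ContinuousLinearMap.snd ℝ _ _)) with hpLdef
    have hev0 : ∀ᶠ τ in 𝓝 (0:ℝ), pL (ycv τ) = 0 := by
      filter_upwards [hG0] with τ hGτ
      exact congrFun (congrArg (fun z => z.2.2.2.1) hGτ) (⟨i, hi⟩ : {i // QU i})
    obtain ⟨W₁, hW₁sub, hW₁open, hW₁mem⟩ := mem_nhds_iff.1 hev0
    have hder0 : ∀ τ ∈ W₁ ∩ W₀, pL (deriv ycv τ) = 0 := by
      intro τ hτ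
      have hyd := hyevd τ hτ.2
      have hA1 : HasDerivAt (fun σ => pL (ycv σ)) (pL (deriv ycv τ)) τ :=
        pL.hasFDerivAt.comp_hasDerivAt τ hyd
      have hA2 : HasDerivAt (fun σ => pL (ycv σ)) 0 τ := by
        have hEq : (fun σ => pL (ycv σ)) =ᶠ[𝓝 τ] (fun _ => (0:ℝ)) :=
          Filter.eventually_of_mem (hW₁open.mem_nhds hτ.1) (fun σ hσ => hW₁sub hσ)
        exact (hasDerivAt_const τ (0:ℝ)).congr_of_eventuallyEq hEq
      exact hA1.unique hA2
    have hopen2 : IsOpen (W₁ ∩ W₀) := hW₁open.inter hW₀open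
    have hmem2 : (0:ℝ) ∈ W₁ ∩ W₀ := ⟨hW₁mem, hW₀mem⟩
    have hB1 : HasDerivAt (fun τ => pL (deriv ycv τ)) (pL u2) 0 :=
      pL.hasFDerivAt.comp_hasDerivAt 0 huder
    have hB2 : HasDerivAt (fun τ => pL (deriv ycv τ)) 0 0 := by
      have hEq : (fun τ => pL (deriv ycv τ)) =ᶠ[𝓝 (0:ℝ)] (fun _ => (0:ℝ)) :=
        Filter.eventually_of_mem (hopen2.mem_nhds hmem2) (fun σ hσ => hder0 σ hσ)
      exact (hasDerivAt_const (0:ℝ) (0:ℝ)).congr_of_eventuallyEq hEq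
    exact hB1.unique hB2
  have hu2v : ∀ i, ¬ 0 < vstar i → u2.2.2 i = 0 := by
    intro i hi
    set pL : ((Fin n → ℝ) × (Fin s → ℝ) × (Fin s → ℝ)) →L[ℝ] ℝ :=
      (ContinuousLinearMap.proj i).comp
        ((ContinuousLinearMap.snd ℝ _ _).comp (ContinuousLinearMap.snd ℝ _ _)) with hpLdef
    have hev0 : ∀ᶠ τ in 𝓝 (0:ℝ), pL (ycv τ) = 0 := by
      filter_upwards [hG0] with τ hGτ
      exact congrFun (congrArg (fun z => z.2.2.2.2) hGτ) (⟨i, hi⟩ : {i // QV i})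
    obtain ⟨W₁, hW₁sub, hW₁open, hW₁mem⟩ := mem_nhds_iff.1 hev0
    have hder0 : ∀ τ ∈ W₁ ∩ W₀, pL (deriv ycv τ) = 0 := by
      intro τ hτ
      have hyd := hyevd τ hτ.2
      have hA1 : HasDerivAt (fun σ => pL (ycv σ)) (pL (deriv ycv τ)) τ :=
        pL.hasFDerivAt.comp_hasDerivAt τ hyd
      have hA2 : HasDerivAt (fun σ => pL (ycv σ)) 0 τ := by
        have hEq : (fun σ => pL (ycv σ)) =ᶠ[𝓝 τ] (fun _ => (0:ℝ)) :=
          Filter.eventually_of_mem (hW₁open.mem_nhds hτ.1) (fun σ hσ => hW₁sub hσ)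
        exact (hasDerivAt_const τ (0:ℝ)).congr_of_eventuallyEq hEq
      exact hA1.unique hA2
    have hopen2 : IsOpen (W₁ ∩ W₀) := hW₁open.inter hW₀open
    have hmem2 : (0:ℝ) ∈ W₁ ∩ W₀ := ⟨hW₁mem, hW₀mem⟩
    have hB1 : HasDerivAt (fun τ => pL (deriv ycv τ)) (pL u2) 0 :=
      pL.hasFDerivAt.comp_hasDerivAt 0 huder
    have hB2 : HasDerivAt (fun τ => pL (deriv ycv τ)) 0 0 := by
      have hEq : (fun τ => pL (deriv ycv τ)) =ᶠ[𝓝 (0:ℝ)] (fun _ => (0:ℝ)) :=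
        Filter.eventually_of_mem (hopen2.mem_nhds hmem2) (fun σ hσ => hder0 σ hσ)
      exact (hasDerivAt_const (0:ℝ) (0:ℝ)).congr_of_eventuallyEq hEq
    exact hB1.unique hB2
  have hfinal : fderiv ℝ L (ycv 0) u2 = 0 := by
    rw [hy0, (hLder xs hxsO).fderiv]
    exact hgrad u2 hu2u hu2v
  rw [hyderiv0, hfinal, add_zero] at hmain
  exact hmain


end
end

section
/- Let H₁₁ ∈ ℝ^{n×n}, H₁₂ ∈ ℝ^{n×s}, H₂₁ ∈ ℝ^{s×n}, H₂₂ ∈ ℝ^{s×s}, W ∈ ℝ^{s×n}, and U ∈ ℝ^{n×k} be real matrices, let σ ∈ {−1,0,1}^s with Σ = diag(σ), U₊ = {i : σᵢ = 1}, V₊ = {i : σᵢ = −1}, and α^c = U₊ ∪ V₊. Define U_mpcc = [[U], [P_{U₊}WU], [−P_{V₊}WU]] ∈ ℝ^{(n+|U₊|+|V₊|)×k}, H_mpcc = [[H₁₁, H₁₂P_{U₊}ᵀ, H₁₂P_{V₊}ᵀ], [P_{U₊}H₂₁, P_{U₊}H₂₂P_{U₊}ᵀ, P_{U₊}H₂₂P_{V₊}ᵀ],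 [P_{V₊}H₂₁, P_{V₊}H₂₂P_{U₊}ᵀ, P_{V₊}H₂₂P_{V₊}ᵀ]], U_abs = [[U], [P_{α^c}ΣWU]] ∈ ℝ^{(n+|α^c|)×k}, and H_abs = [[H₁₁, H₁₂P_{α^c}ᵀ], [P_{α^c}H₂₁, P_{α^c}H₂₂P_{α^c}ᵀ]]. Then U_mpccᵀ H_mpcc U_mpcc = U_absᵀ H_abs U_abs. In particular, U_mpccᵀ H_mpcc U_mpcc is positive semidefinite (respectively positive definite) if and only if U_absᵀ H_abs U_abs is positive semidefinite (respectively positive definite). (With H the Hessian blocks of the Lagrangian, W = ∂_t z(t*) and U a nullspace basis of the LIKQ Jacobian, this is the equivalence of the second order conditions for the abs-normal NLP and its counterpart MPCC.) -/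
open Matrix
open scoped Classical

noncomputable section

/-- `U_mpcc = [[U], [P_{U₊} W U], [−P_{V₊} W U]]`. -/
def Umpcc {n s k : ℕ} (W : Matrix (Fin s) (Fin n) ℝ) (U : Matrix (Fin n) (Fin k) ℝ)
    (σ : Fin s → ℝ) :
    Matrix (Fin n ⊕ ({i // σ i = 1} ⊕ {i // σ i = -1})) (Fin k) ℝ :=
  Matrix.fromRows U
    (Matrix.fromRows (sel (fun i => σ i = 1) * W * U)
      (-(sel (fun i => σ i = -1) * W * U)))

/-- `H_mpcc`, the Hessian blocks in the MPCC variables. -/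
def Hmpcc {n s : ℕ} (H₁₁ : Matrix (Fin n) (Fin n) ℝ) (H₁₂ : Matrix (Fin n) (Fin s) ℝ)
    (H₂₁ : Matrix (Fin s) (Fin n) ℝ) (H₂₂ : Matrix (Fin s) (Fin s) ℝ)
    (σ : Fin s → ℝ) :
    Matrix (Fin n ⊕ ({i // σ i = 1} ⊕ {i // σ i = -1}))
      (Fin n ⊕ ({i // σ i = 1} ⊕ {i // σ i = -1})) ℝ :=
  Matrix.fromRows
    (Matrix.fromCols H₁₁ (Matrix.fromCols
      (H₁₂ * (sel fun i => σ i = 1)ᵀ) (H₁₂ * (sel fun i => σ i = -1)ᵀ)))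
    (Matrix.fromRows
      (Matrix.fromCols (sel (fun i => σ i = 1) * H₂₁) (Matrix.fromCols
        (sel (fun i => σ i = 1) * H₂₂ * (sel fun i => σ i = 1)ᵀ)
        (sel (fun i => σ i = 1) * H₂₂ * (sel fun i => σ i = -1)ᵀ)))
      (Matrix.fromCols (sel (fun i => σ i = -1) * H₂₁) (Matrix.fromCols
        (sel (fun i => σ i = -1) * H₂₂ * (sel fun i => σ i = 1)ᵀ)
        (sel (fun i => σ i = -1) * H₂₂ * (sel fun i => σ i = -1)ᵀ))))

/-- `U_abs = [[U], [P_{αᶜ} Σ W U]]`. -/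
def Uabs {n s k : ℕ} (W : Matrix (Fin s) (Fin n) ℝ) (U : Matrix (Fin n) (Fin k) ℝ)
    (σ : Fin s → ℝ) : Matrix (Fin n ⊕ {i // σ i ≠ 0}) (Fin k) ℝ :=
  Matrix.fromRows U (sel (fun i => σ i ≠ 0) * (Matrix.diagonal σ * W * U))

/-- `H_abs`, the Hessian blocks in the abs-normal variables. -/
def Habs {n s : ℕ} (H₁₁ : Matrix (Fin n) (Fin n) ℝ) (H₁₂ : Matrix (Fin n) (Fin s) ℝ)
    (H₂₁ : Matrix (Fin s) (Fin n) ℝ) (H₂₂ : Matrix (Fin s) (Fin s) ℝ)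
    (σ : Fin s → ℝ) : Matrix (Fin n ⊕ {i // σ i ≠ 0}) (Fin n ⊕ {i // σ i ≠ 0}) ℝ :=
  Matrix.fromBlocks H₁₁ (H₁₂ * (sel fun i => σ i ≠ 0)ᵀ)
    (sel (fun i => σ i ≠ 0) * H₂₁)
    (sel (fun i => σ i ≠ 0) * H₂₂ * (sel fun i => σ i ≠ 0)ᵀ)

lemma selT_mul_sel {k : ℕ} (p : Fin k → Prop) [Fintype {i // p i}] :
    (sel p)ᵀ * sel p = Matrix.diagonal (fun i => if p i then (1:ℝ) else 0) := by
  ext i j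
  simp only [Matrix.mul_apply, Matrix.transpose_apply, sel, Matrix.of_apply,
    Matrix.diagonal_apply, ite_mul, one_mul, zero_mul]
  by_cases hp : p i
  · rw [Finset.sum_eq_single (⟨i, hp⟩ : {i // p i})]
    · simp [hp]
    · intro b _ hb
      rw [if_neg (fun h1 => hb (Subtype.ext h1))]
    · simp
  · rw [Finset.sum_eq_zero]
    · simp [hp]
    · intro b _
      rw [if_neg (fun h1 => hp (by rw [← h1]; exact b.2))]

/-- generic quadratic form identity for block matrices -/
lemma quad_block {n m k : Type*} [Fintype n] [Fintype m] [Fintype k]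
    (H11 : Matrix n n ℝ) (H12 : Matrix n m ℝ) (H21 : Matrix m n ℝ) (H22 : Matrix m m ℝ)
    (U : Matrix n k ℝ) (V : Matrix m k ℝ) :
    (Matrix.fromRows U V)ᵀ * Matrix.fromBlocks H11 H12 H21 H22 * Matrix.fromRows U V =
      Uᵀ * H11 * U + Uᵀ * H12 * V + (Vᵀ * H21 * U + Vᵀ * H22 * V) := by
  rw [Matrix.transpose_fromRows, Matrix.fromCols_mul_fromBlocks,
    Matrix.fromCols_mul_fromRows]
  rw [Matrix.add_mul, Matrix.add_mul]
  abel

lemma Hmpcc_eq_fromBlocks {n s : ℕ} (H₁₁ : Matrix (Fin n) (Fin n) ℝ)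
    (H₁₂ : Matrix (Fin n) (Fin s) ℝ) (H₂₁ : Matrix (Fin s) (Fin n) ℝ)
    (H₂₂ : Matrix (Fin s) (Fin s) ℝ) (σ : Fin s → ℝ) :
    Hmpcc H₁₁ H₁₂ H₂₁ H₂₂ σ =
    Matrix.fromBlocks H₁₁
      (H₁₂ * (Matrix.fromRows (sel fun i => σ i = 1) (sel fun i => σ i = -1))ᵀ)
      ((Matrix.fromRows (sel fun i => σ i = 1) (sel fun i => σ i = -1)) * H₂₁)
      ((Matrix.fromRows (sel fun i => σ i = 1) (sel fun i => σ i = -1)) * H₂₂ *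
        (Matrix.fromRows (sel fun i => σ i = 1) (sel fun i => σ i = -1))ᵀ) := by
  rw [Matrix.transpose_fromRows, Matrix.mul_fromCols, Matrix.fromRows_mul,
    Matrix.fromRows_mul, Matrix.fromRows_mul_fromCols]
  unfold Hmpcc
  ext (i|(i|i)) (j|(j|j)) <;>
    simp [Matrix.fromBlocks, Matrix.fromRows_apply_inl, Matrix.fromRows_apply_inr,
      Matrix.fromCols_apply_inl, Matrix.fromCols_apply_inr]

/-- Equivalence of the reduced Hessians for the abs-normal NLP and its counterpart
MPCC: `U_mpccᵀ H_mpcc U_mpcc = U_absᵀ H_abs U_abs`; in particular the two reduced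
Hessians are simultaneously positive semidefinite respectively positive definite. -/
theorem stmt15 {n s k : ℕ}
    (H₁₁ : Matrix (Fin n) (Fin n) ℝ) (H₁₂ : Matrix (Fin n) (Fin s) ℝ)
    (H₂₁ : Matrix (Fin s) (Fin n) ℝ) (H₂₂ : Matrix (Fin s) (Fin s) ℝ)
    (W : Matrix (Fin s) (Fin n) ℝ) (U : Matrix (Fin n) (Fin k) ℝ)
    (σ : Fin s → ℝ) (hσ : ∀ i, σ i = -1 ∨ σ i = 0 ∨ σ i = 1) :
    (Umpcc W U σ)ᵀ * Hmpcc H₁₁ H₁₂ H₂₁ H₂₂ σ * Umpcc W U σ =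
      (Uabs W U σ)ᵀ * Habs H₁₁ H₁₂ H₂₁ H₂₂ σ * Uabs W U σ ∧
    ((∀ x : Fin k → ℝ,
        0 ≤ x ⬝ᵥ (((Umpcc W U σ)ᵀ * Hmpcc H₁₁ H₁₂ H₂₁ H₂₂ σ * Umpcc W U σ) *ᵥ x)) ↔
      (∀ x : Fin k → ℝ,
        0 ≤ x ⬝ᵥ (((Uabs W U σ)ᵀ * Habs H₁₁ H₁₂ H₂₁ H₂₂ σ * Uabs W U σ) *ᵥ x))) ∧
    ((∀ x : Fin k → ℝ, x ≠ 0 →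
        0 < x ⬝ᵥ (((Umpcc W U σ)ᵀ * Hmpcc H₁₁ H₁₂ H₂₁ H₂₂ σ * Umpcc W U σ) *ᵥ x)) ↔
      (∀ x : Fin k → ℝ, x ≠ 0 →
        0 < x ⬝ᵥ (((Uabs W U σ)ᵀ * Habs H₁₁ H₁₂ H₂₁ H₂₂ σ * Uabs W U σ) *ᵥ x))) := by
  have heq : (Umpcc W U σ)ᵀ * Hmpcc H₁₁ H₁₂ H₂₁ H₂₂ σ * Umpcc W U σ =
      (Uabs W U σ)ᵀ * Habs H₁₁ H₁₂ H₂₁ H₂₂ σ * Uabs W U σ := by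
    set P1 := sel (fun i : Fin s => σ i = 1) with hP1
    set Pm := sel (fun i : Fin s => σ i = -1) with hPm
    set P0 := sel (fun i : Fin s => σ i ≠ 0) with hP0
    set D := Matrix.diagonal σ with hDdef
    set R := Matrix.fromRows P1 Pm with hRdef
    set V := Matrix.fromRows (P1 * W * U) (-(Pm * W * U)) with hVdef
    set M := D * W * U with hMdef
    set C := P0 * (D * W * U) with hCdef
    -- key diagonal identities
    have hD : P1ᵀ * P1 - Pmᵀ * Pm = D := by
      rw [hP1, hPm, selT_mul_sel, selT_mul_sel, hDdef]
      ext i j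
      by_cases hij : i = j
      · subst hij
        rcases hσ i with h | h | h <;>
          norm_num [Matrix.sub_apply, Matrix.diagonal_apply, h]
      · simp [Matrix.sub_apply, Matrix.diagonal_apply, hij]
    have hP0D : P0ᵀ * P0 * D = D := by
      rw [hP0, selT_mul_sel, hDdef, Matrix.diagonal_mul_diagonal]
      exact congrArg Matrix.diagonal
        (funext fun i => by by_cases h : σ i = 0 <;> simp [h])
    have hRV : Rᵀ * V = M := by
      rw [hRdef, hVdef, Matrix.transpose_fromRows, Matrix.fromCols_mul_fromRows,
        Matrix.mul_neg, ← sub_eq_add_neg]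
      simp only [← Matrix.mul_assoc]
      rw [← Matrix.sub_mul, ← Matrix.sub_mul, hD]
    have hVR : Vᵀ * R = Mᵀ := by
      have h := congrArg Matrix.transpose hRV
      rwa [Matrix.transpose_mul, Matrix.transpose_transpose] at h
    have hCV : P0ᵀ * C = M := by
      rw [hCdef]
      simp only [← Matrix.mul_assoc]
      rw [hP0D]
    have hVC : Cᵀ * P0 = Mᵀ := by
      have h := congrArg Matrix.transpose hCV
      rwa [Matrix.transpose_mul, Matrix.transpose_transpose] at h
    have hU1 : Umpcc W U σ = Matrix.fromRows U V := rfl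
    have hU2 : Uabs W U σ = Matrix.fromRows U C := rfl
    have hH2 : Habs H₁₁ H₁₂ H₂₁ H₂₂ σ =
        Matrix.fromBlocks H₁₁ (H₁₂ * P0ᵀ) (P0 * H₂₁) (P0 * H₂₂ * P0ᵀ) := rfl
    have hV2 : ∀ X : Matrix (Fin s) (Fin k) ℝ, Vᵀ * (R * X) = Mᵀ * X := fun X => by
      rw [← Matrix.mul_assoc, hVR]
    have hC2 : ∀ X : Matrix (Fin s) (Fin k) ℝ, Cᵀ * (P0 * X) = Mᵀ * X := fun X => by
      rw [← Matrix.mul_assoc, hVC]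
    rw [hU1, hU2, hH2, Hmpcc_eq_fromBlocks, ← hP1, ← hPm, ← hRdef, quad_block, quad_block]
    simp only [Matrix.mul_assoc]
    rw [hRV, hCV]
    simp only [hV2, hC2]
  exact ⟨heq, by rw [heq], by rw [heq]⟩

end
end
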